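/- arXiv:2507.08163 — 4 statements merged into one kernel-verified Lean document; each statement's English description precedes it below -/
import Mathlib

section
/- (Gaussian hypothesis-testing dominance, spherical case.) Let σ > 0, d ≥ 1, and for v ∈ ℝ^d let P_v denote the Gaussian product measure on ℝ^d whose i-th coordinate is the Gaussian measure on ℝ with mean v_i and variance σ². Let Φ(t) denote the standard normal CDF, Φ(t) = (2π)^{−1/2}·∫_{−∞}^t e^{−u²/2} du. Then for all v, w ∈ ℝ^d with ‖v − w‖₂ ≤ r, every Borel set E ⊆ ℝ^d, and every a ∈ ℝ: if P_v(E) ≥ Φ(a) then P_w(E) ≥ Φ(a − r/σ). -/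
open MeasureTheory ProbabilityTheory

/-- The standard normal cumulative distribution function. -/
noncomputable def stdNormalCDF (t : ℝ) : ℝ :=
  ∫ u in Set.Iic t, (Real.sqrt (2 * Real.pi))⁻¹ * Real.exp (-u ^ 2 / 2)

instance gaussSq_isProb (μ σ : ℝ) : IsProbabilityMeasure (gaussianReal μ ⟨σ ^ 2, sq_nonneg σ⟩) :=
  instIsProbabilityMeasureGaussianReal μ _

@[simp] theorem coe_sq_mk (σ : ℝ) : NNReal.toReal ⟨σ ^ 2, sq_nonneg σ⟩ = σ ^ 2 := rfl


theorem stdNormalCDF_eq (t : ℝ) :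
    stdNormalCDF t = ∫ u in Set.Iic t, gaussianPDFReal 0 1 u := by
  unfold stdNormalCDF
  refine integral_congr_ae (Filter.Eventually.of_forall fun u => ?_)
  simp [gaussianPDFReal]

theorem stdNormalCDF_mono : Monotone stdNormalCDF := by
  intro b c hbc
  rw [stdNormalCDF_eq, stdNormalCDF_eq]
  refine setIntegral_mono_set (integrable_gaussianPDFReal 0 1).integrableOn
    (Filter.Eventually.of_forall fun u => gaussianPDFReal_nonneg _ _ u)
    (HasSubset.Subset.eventuallyLE (Set.Iic_subset_Iic.2 hbc))

theorem gaussianReal_Iic (σ : ℝ) (hσ : 0 < σ) (m c : ℝ) :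
    gaussianReal m ⟨σ ^ 2, sq_nonneg σ⟩ (Set.Iic c)
      = ENNReal.ofReal (stdNormalCDF ((c - m) / σ)) := by
  have h1 : (gaussianReal 0 1).map (fun u => σ * u) = gaussianReal 0 ⟨σ ^ 2, sq_nonneg σ⟩ := by
    have := gaussianReal_map_const_mul (μ := 0) (v := 1) σ
    simp at this; exact this
  have h2 : (gaussianReal 0 ⟨σ ^ 2, sq_nonneg σ⟩).map (fun u => u + m)
      = gaussianReal m ⟨σ ^ 2, sq_nonneg σ⟩ := by
    simpa using gaussianReal_map_add_const (μ := 0) (v := ⟨σ ^ 2, sq_nonneg σ⟩) m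
  rw [← h2, ← h1, Measure.map_map (measurable_add_const m) (measurable_const_mul σ),
    Measure.map_apply ((measurable_add_const m).comp (measurable_const_mul σ))
      measurableSet_Iic]
  have hset : (fun u => u + m) ∘ (fun u => σ * u) ⁻¹' Set.Iic c = Set.Iic ((c - m) / σ) := by
    ext u
    simp only [Set.mem_preimage, Function.comp_apply, Set.mem_Iic]
    rw [le_div_iff₀ hσ, mul_comm u σ]
    constructor <;> intro h <;> linarith
  rw [hset, gaussianReal_apply_eq_integral _ one_ne_zero, ← stdNormalCDF_eq]

theorem pi_gauss_withDensity (d : ℕ) (σ : ℝ) (hσ : 0 < σ) (m : Fin d → ℝ) :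
    (Measure.pi fun i => gaussianReal (m i) ⟨σ ^ 2, sq_nonneg σ⟩ :
        Measure (Fin d → ℝ))
      = (Measure.pi fun _ => (volume : Measure ℝ)).withDensity
          (fun x => ENNReal.ofReal (∏ i, gaussianPDFReal (m i) ⟨σ ^ 2, sq_nonneg σ⟩ (x i))) := by
  have hσ2 : (⟨σ ^ 2, sq_nonneg σ⟩ : NNReal) ≠ 0 := by
    simp [← NNReal.coe_injective.ne_iff, (pow_pos hσ 2).ne']
  refine Measure.pi_eq (μ := fun i => gaussianReal (m i) ⟨σ ^ 2, sq_nonneg σ⟩)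
    (μ' := (Measure.pi fun _ => (volume : Measure ℝ)).withDensity
      (fun x => ENNReal.ofReal (∏ i, gaussianPDFReal (m i) ⟨σ ^ 2, sq_nonneg σ⟩ (x i))))
    fun s hs => ?_
  rw [withDensity_apply _ (MeasurableSet.univ_pi hs)]
  set g : Fin d → ℝ → ℝ := fun i => (s i).indicator (gaussianPDFReal (m i) ⟨σ ^ 2, sq_nonneg σ⟩)
  have hgint : ∀ i, Integrable (g i) := fun i =>
    (integrable_gaussianPDFReal _ _).indicator (hs i)
  have key : ∀ x : Fin d → ℝ,
      (Set.univ.pi s).indicator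
        (fun x : Fin d → ℝ =>
          ENNReal.ofReal (∏ i, gaussianPDFReal (m i) ⟨σ ^ 2, sq_nonneg σ⟩ (x i))) x
        = ENNReal.ofReal (∏ i, g i (x i)) := by
    intro x
    by_cases hx : x ∈ Set.univ.pi s
    · rw [Set.indicator_of_mem hx]
      congr 1
      exact Finset.prod_congr rfl fun i _ =>
        (Set.indicator_of_mem (hx i (Set.mem_univ i)) _).symm
    · rw [Set.indicator_of_notMem hx]
      rw [Set.mem_univ_pi] at hx
      push_neg at hx
      obtain ⟨i, hi⟩ := hx
      rw [Finset.prod_eq_zero (Finset.mem_univ i) (by simp [g, Set.indicator_of_notMem hi])]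
      simp
  calc ∫⁻ x in Set.univ.pi s,
          (fun x : Fin d → ℝ =>
            ENNReal.ofReal (∏ i, gaussianPDFReal (m i) ⟨σ ^ 2, sq_nonneg σ⟩ (x i))) x
          ∂(Measure.pi fun _ => (volume : Measure ℝ))
      = ∫⁻ x, ENNReal.ofReal (∏ i, g i (x i)) ∂(Measure.pi fun _ => (volume : Measure ℝ)) := by
        rw [← lintegral_indicator (MeasurableSet.univ_pi hs)]
        exact lintegral_congr key
    _ = ENNReal.ofReal (∫ x : Fin d → ℝ, ∏ i, g i (x i)) := by
        rw [← ofReal_integral_eq_lintegral_ofReal (Integrable.fintype_prod hgint)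
            (Filter.Eventually.of_forall fun x =>
              Finset.prod_nonneg fun i _ => Set.indicator_nonneg
                (fun y _ => gaussianPDFReal_nonneg _ _ y) _)]
        rw [MeasureTheory.volume_pi]
    _ = ENNReal.ofReal (∏ i, ∫ t : ℝ, g i t) :=
        congrArg ENNReal.ofReal (integral_fintype_prod_eq_prod g)
    _ = ∏ i, ENNReal.ofReal (∫ t : ℝ, g i t) :=
        ENNReal.ofReal_prod_of_nonneg fun i _ => integral_nonneg fun t =>
          Set.indicator_nonneg (fun y _ => gaussianPDFReal_nonneg _ _ y) _
    _ = ∏ i, gaussianReal (m i) ⟨σ ^ 2, sq_nonneg σ⟩ (s i) := by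
        refine Finset.prod_congr rfl fun i _ => ?_
        rw [gaussianReal_apply_eq_integral _ hσ2, integral_indicator (hs i)]

theorem euclid_vol_pi (d : ℕ) (g : EuclideanSpace ℝ (Fin d) → ENNReal)
    (T : Set (EuclideanSpace ℝ (Fin d))) :
    ∫⁻ x in WithLp.toLp 2 ⁻¹' T, g (WithLp.toLp 2 x) ∂(Measure.pi fun _ => (volume : Measure ℝ))
      = ∫⁻ y in T, g y ∂(volume : Measure (EuclideanSpace ℝ (Fin d))) := by
  rw [← MeasureTheory.volume_pi]
  exact (PiLp.volume_preserving_toLp (Fin d)).setLIntegral_comp_preimage_emb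
    (MeasurableEquiv.toLp 2 (Fin d → ℝ)).measurableEmbedding g T

theorem liso_mp (d : ℕ) (f : EuclideanSpace ℝ (Fin d) ≃ₗᵢ[ℝ] EuclideanSpace ℝ (Fin d)) :
    MeasurePreserving f volume volume := by
  refine ⟨f.continuous.measurable, ?_⟩
  let b := stdOrthonormalBasis ℝ (EuclideanSpace ℝ (Fin d))
  calc Measure.map f volume = Measure.map f.toContinuousLinearEquiv b.toBasis.addHaar := by
        rw [b.addHaar_eq_volume]; rfl
    _ = (b.toBasis.map f.toContinuousLinearEquiv.toLinearEquiv).addHaar :=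
        Module.Basis.map_addHaar _ _
    _ = (b.map f).toBasis.addHaar := by rw [b.toBasis_map]; rfl
    _ = volume := (b.map f).addHaar_eq_volume

theorem prod_gauss_pdf (d : ℕ) (σ : ℝ) (hσ : 0 < σ) (y : EuclideanSpace ℝ (Fin d)) :
    ∏ i, gaussianPDFReal 0 ⟨σ ^ 2, sq_nonneg σ⟩ (y i)
      = ((Real.sqrt (2 * Real.pi * σ ^ 2))⁻¹) ^ d * Real.exp (-‖y‖ ^ 2 / (2 * σ ^ 2)) := by
  have hnorm : ‖y‖ ^ 2 = ∑ i, (y i) ^ 2 := by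
    rw [EuclideanSpace.norm_eq, Real.sq_sqrt (Finset.sum_nonneg fun i _ => sq_nonneg _)]
    simp [sq_abs]
  simp only [gaussianPDFReal, coe_sq_mk, sub_zero]
  rw [Finset.prod_mul_distrib, Finset.prod_const, ← Real.exp_sum, hnorm]
  congr 1
  · simp
  · simp [Finset.sum_div, neg_div]



theorem rot_inv (d : ℕ) (σ : ℝ) (hσ : 0 < σ)
    (f : EuclideanSpace ℝ (Fin d) ≃ₗᵢ[ℝ] EuclideanSpace ℝ (Fin d))
    (S : Set (EuclideanSpace ℝ (Fin d))) (hS : MeasurableSet S) :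
    (Measure.pi fun _ : Fin d => gaussianReal 0 ⟨σ ^ 2, sq_nonneg σ⟩) (WithLp.toLp 2 ⁻¹' (f ⁻¹' S))
      = (Measure.pi fun _ : Fin d => gaussianReal 0 ⟨σ ^ 2, sq_nonneg σ⟩) (WithLp.toLp 2 ⁻¹' S) := by
  have hd : (Measure.pi fun _ : Fin d => gaussianReal 0 ⟨σ ^ 2, sq_nonneg σ⟩ :
      Measure (Fin d → ℝ))
      = (Measure.pi fun _ => (volume : Measure ℝ)).withDensity
          (fun x => ENNReal.ofReal (∏ i, gaussianPDFReal 0 ⟨σ ^ 2, sq_nonneg σ⟩ (x i))) := by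
    simpa using pi_gauss_withDensity d σ hσ (fun _ => 0)
  have h1 : ((Measure.pi fun _ => (volume : Measure ℝ)).withDensity
        (fun x => ENNReal.ofReal (∏ i, gaussianPDFReal 0 ⟨σ ^ 2, sq_nonneg σ⟩ (x i))))
        (WithLp.toLp 2 ⁻¹' (f ⁻¹' S))
      = ∫⁻ x in f ⁻¹' S, ENNReal.ofReal (∏ i, gaussianPDFReal 0 ⟨σ ^ 2, sq_nonneg σ⟩ (x i))
          ∂(volume : Measure (EuclideanSpace ℝ (Fin d))) := by
    rw [withDensity_apply _ ((hS.preimage f.continuous.measurable).preimage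
      (WithLp.measurable_toLp 2 _))]
    exact euclid_vol_pi d
      (fun x => ENNReal.ofReal (∏ i, gaussianPDFReal 0 ⟨σ ^ 2, sq_nonneg σ⟩ (x i))) (f ⁻¹' S)
  have h2 : ((Measure.pi fun _ => (volume : Measure ℝ)).withDensity
        (fun x => ENNReal.ofReal (∏ i, gaussianPDFReal 0 ⟨σ ^ 2, sq_nonneg σ⟩ (x i)))) (WithLp.toLp 2 ⁻¹' S)
      = ∫⁻ y in S, ENNReal.ofReal (∏ i, gaussianPDFReal 0 ⟨σ ^ 2, sq_nonneg σ⟩ (y i))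
          ∂(volume : Measure (EuclideanSpace ℝ (Fin d))) := by
    rw [withDensity_apply _ (hS.preimage (WithLp.measurable_toLp 2 _))]
    exact euclid_vol_pi d
      (fun x => ENNReal.ofReal (∏ i, gaussianPDFReal 0 ⟨σ ^ 2, sq_nonneg σ⟩ (x i))) S
  rw [hd, h1, h2]
  calc ∫⁻ x in f ⁻¹' S, ENNReal.ofReal (∏ i, gaussianPDFReal 0 ⟨σ ^ 2, sq_nonneg σ⟩ (x i)) ∂volume
      = ∫⁻ x in f ⁻¹' S,
          ENNReal.ofReal (∏ i, gaussianPDFReal 0 ⟨σ ^ 2, sq_nonneg σ⟩ (f x i)) ∂volume := by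
        refine setLIntegral_congr_fun (hS.preimage f.continuous.measurable)
          (fun x _ => ?_)
        rw [prod_gauss_pdf d σ hσ, prod_gauss_pdf d σ hσ, f.norm_map]
    _ = ∫⁻ y in S, ENNReal.ofReal (∏ i, gaussianPDFReal 0 ⟨σ ^ 2, sq_nonneg σ⟩ (y i)) ∂volume :=
        (liso_mp d f).setLIntegral_comp_preimage_emb
          (f.toHomeomorph.measurableEmbedding)
          (fun y => ENNReal.ofReal (∏ i, gaussianPDFReal 0 ⟨σ ^ 2, sq_nonneg σ⟩ (y i))) S
theorem pi_map_add (d : ℕ) (σ : ℝ) (m : EuclideanSpace ℝ (Fin d)) :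
    (Measure.pi fun i => gaussianReal (m i) ⟨σ ^ 2, sq_nonneg σ⟩ :
        Measure (Fin d → ℝ))
      = (Measure.pi fun _ : Fin d => gaussianReal 0 ⟨σ ^ 2, sq_nonneg σ⟩).map
          (fun x => x + m.ofLp) := by
  refine Measure.pi_eq (μ := fun i => gaussianReal (m i) ⟨σ ^ 2, sq_nonneg σ⟩)
    (μ' := (Measure.pi fun _ : Fin d => gaussianReal 0 ⟨σ ^ 2, sq_nonneg σ⟩).map
      (fun x : Fin d → ℝ => x + m.ofLp)) fun s hs => ?_
  have hset : (fun x : Fin d → ℝ => x + m.ofLp) ⁻¹' Set.univ.pi s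
      = Set.univ.pi fun i => (fun t : ℝ => t + m i) ⁻¹' s i := by
    ext x
    simp only [Set.mem_preimage, Set.mem_pi, Set.mem_univ, forall_true_left]
    rfl
  calc ((Measure.pi fun _ : Fin d => gaussianReal 0 ⟨σ ^ 2, sq_nonneg σ⟩).map
        (fun x : Fin d → ℝ => x + m.ofLp)) (Set.univ.pi s)
      = (Measure.pi fun _ : Fin d => gaussianReal 0 ⟨σ ^ 2, sq_nonneg σ⟩)
          ((fun x : Fin d → ℝ => x + m.ofLp) ⁻¹' Set.univ.pi s) :=
        Measure.map_apply (measurable_add_const m.ofLp) (MeasurableSet.univ_pi hs)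
    _ = (Measure.pi fun _ : Fin d => gaussianReal 0 ⟨σ ^ 2, sq_nonneg σ⟩)
          (Set.univ.pi fun i => (fun t : ℝ => t + m i) ⁻¹' s i) := congrArg _ hset
    _ = ∏ i, gaussianReal 0 ⟨σ ^ 2, sq_nonneg σ⟩ ((fun t : ℝ => t + m i) ⁻¹' s i) :=
        Measure.pi_pi _ _
    _ = ∏ i, gaussianReal (m i) ⟨σ ^ 2, sq_nonneg σ⟩ (s i) := by
        refine Finset.prod_congr rfl fun i _ => ?_
        rw [← Measure.map_apply (measurable_add_const (m i)) (hs i)]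
        exact congrArg (fun μ : Measure ℝ => μ (s i))
          (by simpa using gaussianReal_map_add_const (μ := 0) (v := ⟨σ ^ 2, sq_nonneg σ⟩) (m i))
    _ = _ := rfl

theorem core_axis (d : ℕ) (hd : 0 < d) (σ s : ℝ) (hσ : 0 < σ) (hs : 0 ≤ s)
    (i0 : Fin d)
    (F : Set ((Fin d → ℝ))) (hF : MeasurableSet F) (a : ℝ)
    (h : (Measure.pi fun _ : Fin d => gaussianReal 0 ⟨σ ^ 2, sq_nonneg σ⟩) F
        ≥ ENNReal.ofReal (stdNormalCDF a)) :
    (Measure.pi fun i => gaussianReal ((s • EuclideanSpace.single i0 (1:ℝ)) i)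
        ⟨σ ^ 2, sq_nonneg σ⟩) F
      ≥ ENNReal.ofReal (stdNormalCDF (a - s / σ)) := by
  classical
  set m : EuclideanSpace ℝ (Fin d) := s • EuclideanSpace.single i0 (1:ℝ) with hm
  have hmi : ∀ i, m i = if i = i0 then s else 0 := by
    intro i
    simp [hm, EuclideanSpace.single_apply]
  set P0 : Measure ((Fin d → ℝ)) :=
    Measure.pi fun _ : Fin d => gaussianReal 0 ⟨σ ^ 2, sq_nonneg σ⟩ with hP0
  set ℓ : (Fin d → ℝ) → ENNReal :=
    fun x => ENNReal.ofReal (Real.exp (s * x i0 / σ ^ 2 - s ^ 2 / (2 * σ ^ 2))) with hℓ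
  have hℓmeas : Measurable ℓ := by
    apply Measurable.ennreal_ofReal
    exact Measurable.exp (by fun_prop)
  -- density identity
  have hratio : ∀ t : ℝ, gaussianPDFReal s ⟨σ ^ 2, sq_nonneg σ⟩ t
      = gaussianPDFReal 0 ⟨σ ^ 2, sq_nonneg σ⟩ t
        * Real.exp (s * t / σ ^ 2 - s ^ 2 / (2 * σ ^ 2)) := by
    intro t
    simp only [gaussianPDFReal, coe_sq_mk, sub_zero]
    rw [mul_assoc ((Real.sqrt (2 * Real.pi * σ ^ 2)))⁻¹, ← Real.exp_add]
    congr 2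
    field_simp
    ring
  have hρ0 : Measurable fun x : (Fin d → ℝ) =>
      ENNReal.ofReal (∏ i, gaussianPDFReal 0 ⟨σ ^ 2, sq_nonneg σ⟩ (x i)) := by
    apply Measurable.ennreal_ofReal
    exact Finset.measurable_prod _ fun i _ =>
      (measurable_gaussianPDFReal 0 _).comp (measurable_pi_apply i)
  have hfun : (fun x : (Fin d → ℝ) =>
        ENNReal.ofReal (∏ i, gaussianPDFReal (m i) ⟨σ ^ 2, sq_nonneg σ⟩ (x i)))
      = (fun x : (Fin d → ℝ) =>
          ENNReal.ofReal (∏ i, gaussianPDFReal 0 ⟨σ ^ 2, sq_nonneg σ⟩ (x i))) * ℓ := by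
    funext x
    have hx : ∏ i, gaussianPDFReal (m i) ⟨σ ^ 2, sq_nonneg σ⟩ (x i)
        = (∏ i, gaussianPDFReal 0 ⟨σ ^ 2, sq_nonneg σ⟩ (x i))
          * Real.exp (s * x i0 / σ ^ 2 - s ^ 2 / (2 * σ ^ 2)) := by
      rw [← Finset.mul_prod_erase Finset.univ _ (Finset.mem_univ i0),
        ← Finset.mul_prod_erase Finset.univ
          (fun i => gaussianPDFReal 0 ⟨σ ^ 2, sq_nonneg σ⟩ (x i)) (Finset.mem_univ i0)]
      have : ∀ i ∈ Finset.univ.erase i0,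
          gaussianPDFReal (m i) ⟨σ ^ 2, sq_nonneg σ⟩ (x i)
            = gaussianPDFReal 0 ⟨σ ^ 2, sq_nonneg σ⟩ (x i) := by
        intro i hi
        rw [hmi i, if_neg (Finset.mem_erase.1 hi).1]
      rw [Finset.prod_congr rfl this, hmi i0, if_pos rfl, hratio (x i0)]
      ring
    simp only [Pi.mul_apply, hℓ, hx]
    exact ENNReal.ofReal_mul (Finset.prod_nonneg fun i _ => gaussianPDFReal_nonneg _ _ _)
  have hdens : (Measure.pi fun i => gaussianReal (m i) ⟨σ ^ 2, sq_nonneg σ⟩ :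
      Measure ((Fin d → ℝ))) = P0.withDensity ℓ := by
    calc (Measure.pi fun i => gaussianReal (m i) ⟨σ ^ 2, sq_nonneg σ⟩ :
          Measure ((Fin d → ℝ)))
        = (Measure.pi fun _ => (volume : Measure ℝ)).withDensity
            (fun x => ENNReal.ofReal (∏ i, gaussianPDFReal (m i) ⟨σ ^ 2, sq_nonneg σ⟩ (x i))) :=
          pi_gauss_withDensity d σ hσ m
      _ = (Measure.pi fun _ => (volume : Measure ℝ)).withDensity
            ((fun x : (Fin d → ℝ) =>
              ENNReal.ofReal (∏ i, gaussianPDFReal 0 ⟨σ ^ 2, sq_nonneg σ⟩ (x i))) * ℓ) :=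
          congrArg _ hfun
      _ = ((Measure.pi fun _ => (volume : Measure ℝ)).withDensity
            (fun x : (Fin d → ℝ) =>
              ENNReal.ofReal (∏ i, gaussianPDFReal 0 ⟨σ ^ 2, sq_nonneg σ⟩ (x i)))).withDensity ℓ :=
          withDensity_mul _ hρ0 hℓmeas
      _ = P0.withDensity ℓ := by
          rw [hP0]
          exact congrArg (fun μ : Measure ((Fin d → ℝ)) => μ.withDensity ℓ)
            (pi_gauss_withDensity d σ hσ (fun _ => (0:ℝ))).symm
  -- the half-space
  set A : Set ((Fin d → ℝ)) := (fun x => x i0) ⁻¹' Set.Iic (σ * a) with hA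
  have hAmeas : MeasurableSet A := (measurable_pi_apply i0) measurableSet_Iic
  have hbox : ∀ c : ℝ, ∀ m' : Fin d → ℝ,
      (Measure.pi fun i => gaussianReal (m' i) ⟨σ ^ 2, sq_nonneg σ⟩ :
        Measure ((Fin d → ℝ))) ((fun x => x i0) ⁻¹' Set.Iic c)
        = gaussianReal (m' i0) ⟨σ ^ 2, sq_nonneg σ⟩ (Set.Iic c) := by
    intro c m'
    have : ((fun x : (Fin d → ℝ) => x i0) ⁻¹' Set.Iic c)
        = Set.univ.pi fun i => if i = i0 then Set.Iic c else Set.univ := by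
      ext x
      simp only [Set.mem_preimage, Set.mem_pi, Set.mem_univ, forall_true_left]
      constructor
      · intro hx i
        by_cases hi : i = i0
        · subst hi; simpa using hx
        · simp [hi]
      · intro hx
        have := hx i0
        simpa using this
    calc (Measure.pi fun i => gaussianReal (m' i) ⟨σ ^ 2, sq_nonneg σ⟩ :
          Measure ((Fin d → ℝ))) ((fun x => x i0) ⁻¹' Set.Iic c)
        = (Measure.pi fun i => gaussianReal (m' i) ⟨σ ^ 2, sq_nonneg σ⟩ :
            Measure ((Fin d → ℝ)))
            (Set.univ.pi fun i => if i = i0 then Set.Iic c else Set.univ) := congrArg _ this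
      _ = ∏ i, gaussianReal (m' i) ⟨σ ^ 2, sq_nonneg σ⟩
            (if i = i0 then Set.Iic c else Set.univ) := Measure.pi_pi _ _
      _ = gaussianReal (m' i0) ⟨σ ^ 2, sq_nonneg σ⟩ (Set.Iic c) := by
          rw [Finset.prod_eq_single i0 (fun i _ hi => by simp [hi]) (by simp)]
          simp
  have hP0A : P0 A = ENNReal.ofReal (stdNormalCDF a) := by
    have hb : P0 A = gaussianReal 0 ⟨σ ^ 2, sq_nonneg σ⟩ (Set.Iic (σ * a)) :=
      hbox (σ * a) (fun _ => 0)
    rw [hb, gaussianReal_Iic σ hσ]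
    congr 2
    field_simp
    ring
  have hPmA : (Measure.pi fun i => gaussianReal (m i) ⟨σ ^ 2, sq_nonneg σ⟩ :
      Measure ((Fin d → ℝ))) A = ENNReal.ofReal (stdNormalCDF (a - s / σ)) := by
    have hb : (Measure.pi fun i => gaussianReal (m i) ⟨σ ^ 2, sq_nonneg σ⟩ :
        Measure ((Fin d → ℝ))) A
        = gaussianReal (m i0) ⟨σ ^ 2, sq_nonneg σ⟩ (Set.Iic (σ * a)) := hbox (σ * a) m
    rw [hb, hmi i0, if_pos rfl, gaussianReal_Iic σ hσ]
    congr 2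
    field_simp
  -- Neyman–Pearson
  set κ : ENNReal := ENNReal.ofReal (Real.exp (s * (σ * a) / σ ^ 2 - s ^ 2 / (2 * σ ^ 2)))
    with hκ
  have hℓ_le : ∀ x ∈ A, ℓ x ≤ κ := by
    intro x hx
    refine ENNReal.ofReal_le_ofReal (Real.exp_le_exp.2 ?_)
    have : s * x i0 ≤ s * (σ * a) := mul_le_mul_of_nonneg_left hx hs
    have h2 : (0:ℝ) < σ ^ 2 := by positivity
    gcongr
  have hℓ_ge : ∀ x ∉ A, κ ≤ ℓ x := by
    intro x hx
    refine ENNReal.ofReal_le_ofReal (Real.exp_le_exp.2 ?_)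
    have hx' : σ * a ≤ x i0 := le_of_lt (by simpa [hA, Set.mem_preimage] using hx)
    have : s * (σ * a) ≤ s * x i0 := mul_le_mul_of_nonneg_left hx' hs
    have h2 : (0:ℝ) < σ ^ 2 := by positivity
    gcongr
  haveI : IsProbabilityMeasure P0 := Measure.pi.instIsProbabilityMeasure _
  have hP0Ale : P0 A ≤ P0 F := by
    rw [hP0A]; exact h
  have hdiff : P0 (A \ F) ≤ P0 (F \ A) := by
    have h1 : P0 (F ∩ A) + P0 (A \ F) = P0 A := by
      rw [Set.inter_comm]; exact measure_inter_add_diff A hF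
    have h2 : P0 (F ∩ A) + P0 (F \ A) = P0 F := measure_inter_add_diff F hAmeas
    have hle : P0 (F ∩ A) + P0 (A \ F) ≤ P0 (F ∩ A) + P0 (F \ A) := by
      rw [h1, h2]; exact hP0Ale
    exact (ENNReal.add_le_add_iff_left (measure_ne_top P0 _)).1 hle
  have hdisjF : Disjoint (F ∩ A) (F \ A) :=
    Set.disjoint_left.2 fun x hx hx' => hx'.2 hx.2
  have hdisjA : Disjoint (F ∩ A) (A \ F) :=
    Set.disjoint_left.2 fun x hx hx' => hx'.2 hx.1
  have hsplitF : ∫⁻ x in F, ℓ x ∂P0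
      = ∫⁻ x in F ∩ A, ℓ x ∂P0 + ∫⁻ x in F \ A, ℓ x ∂P0 := by
    rw [← lintegral_union (hF.diff hAmeas) hdisjF, Set.inter_union_diff]
  have hsplitA : ∫⁻ x in A, ℓ x ∂P0
      = ∫⁻ x in F ∩ A, ℓ x ∂P0 + ∫⁻ x in A \ F, ℓ x ∂P0 := by
    rw [← lintegral_union (hAmeas.diff hF) hdisjA, Set.inter_comm, Set.inter_union_diff]
  have hupper : ∫⁻ x in A \ F, ℓ x ∂P0 ≤ κ * P0 (A \ F) := by
    rw [← setLIntegral_const (A \ F) κ]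
    exact setLIntegral_mono measurable_const fun x hx => hℓ_le x hx.1
  have hlower : κ * P0 (F \ A) ≤ ∫⁻ x in F \ A, ℓ x ∂P0 := by
    rw [← setLIntegral_const (F \ A) κ]
    exact setLIntegral_mono hℓmeas fun x hx => hℓ_ge x hx.2
  have key : ∫⁻ x in A, ℓ x ∂P0 ≤ ∫⁻ x in F, ℓ x ∂P0 := by
    rw [hsplitF, hsplitA]
    exact add_le_add le_rfl (hupper.trans ((mul_le_mul_right hdiff κ).trans hlower))
  have happF : (Measure.pi fun i => gaussianReal (m i) ⟨σ ^ 2, sq_nonneg σ⟩ :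
      Measure ((Fin d → ℝ))) F = ∫⁻ x in F, ℓ x ∂P0 := by
    rw [hdens]; exact withDensity_apply _ hF
  have happA : (Measure.pi fun i => gaussianReal (m i) ⟨σ ^ 2, sq_nonneg σ⟩ :
      Measure ((Fin d → ℝ))) A = ∫⁻ x in A, ℓ x ∂P0 := by
    rw [hdens]; exact withDensity_apply _ hAmeas
  calc ENNReal.ofReal (stdNormalCDF (a - s / σ))
      = ∫⁻ x in A, ℓ x ∂P0 := by rw [← happA, hPmA]
    _ ≤ ∫⁻ x in F, ℓ x ∂P0 := key
    _ = _ := happF.symm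


/-- Gaussian hypothesis-testing dominance, spherical case: for the spherical Gaussian
measure `P_v` on `ℝ^d` with mean `v` and coordinate variance `σ²`, if
`‖v - w‖₂ ≤ r` and `P_v E ≥ Φ(a)`, then `P_w E ≥ Φ(a - r/σ)`. -/
theorem gaussian_dominance_spherical (d : ℕ) (hd : 1 ≤ d) (σ r : ℝ) (hσ : 0 < σ)
    (hr : 0 ≤ r) (v w : EuclideanSpace ℝ (Fin d)) (hvw : ‖v - w‖ ≤ r)
    (E : Set (EuclideanSpace ℝ (Fin d))) (hE : MeasurableSet E) (a : ℝ)
    (h : (Measure.pi fun i => gaussianReal (v i) ⟨σ ^ 2, sq_nonneg σ⟩) (WithLp.toLp 2 ⁻¹' E)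
          ≥ ENNReal.ofReal (stdNormalCDF a)) :
    (Measure.pi fun i => gaussianReal (w i) ⟨σ ^ 2, sq_nonneg σ⟩) (WithLp.toLp 2 ⁻¹' E)
      ≥ ENNReal.ofReal (stdNormalCDF (a - r / σ)) := by
  classical
  set i0 : Fin d := ⟨0, hd⟩ with hi0
  set δ : EuclideanSpace ℝ (Fin d) := w - v with hδ
  set s : ℝ := ‖δ‖ with hsdef
  have hs0 : 0 ≤ s := norm_nonneg _
  have hsr : s ≤ r := by rw [hsdef, hδ, norm_sub_rev]; exact hvw
  set e : EuclideanSpace ℝ (Fin d) := EuclideanSpace.single i0 (1:ℝ) with he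
  have hnorm : ‖(s • e : EuclideanSpace ℝ (Fin d))‖ = ‖δ‖ := by
    rw [norm_smul, he, EuclideanSpace.norm_single]
    simp [abs_of_nonneg hs0, hsdef]
  set f : EuclideanSpace ℝ (Fin d) ≃ₗᵢ[ℝ] EuclideanSpace ℝ (Fin d) :=
    Submodule.reflection (ℝ ∙ ((s • e : EuclideanSpace ℝ (Fin d)) - δ))ᗮ with hfdef
  have hf : f (s • e) = δ := Submodule.reflection_sub hnorm
  set P0 : Measure (Fin d → ℝ) :=
    Measure.pi fun _ : Fin d => gaussianReal 0 ⟨σ ^ 2, sq_nonneg σ⟩ with hP0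
  set T1 : Set (EuclideanSpace ℝ (Fin d)) := (fun x => x + v) ⁻¹' E with hT1
  have hT1m : MeasurableSet T1 := hE.preimage (measurable_add_const v)
  set F : Set (EuclideanSpace ℝ (Fin d)) := f ⁻¹' T1 with hFdef
  have hFm : MeasurableSet F := hT1m.preimage f.continuous.measurable
  have hPv : (Measure.pi fun i => gaussianReal (v i) ⟨σ ^ 2, sq_nonneg σ⟩ :
      Measure (Fin d → ℝ)) (WithLp.toLp 2 ⁻¹' E) = P0 (WithLp.toLp 2 ⁻¹' T1) := by
    rw [pi_map_add d σ v, hP0, hT1]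
    exact Measure.map_apply (measurable_add_const _) (hE.preimage (WithLp.measurable_toLp 2 _))
  have hP0F : P0 (WithLp.toLp 2 ⁻¹' F) = P0 (WithLp.toLp 2 ⁻¹' T1) := by
    rw [hP0, hFdef]
    exact rot_inv d σ hσ f T1 hT1m
  have h1 : P0 (WithLp.toLp 2 ⁻¹' F) ≥ ENNReal.ofReal (stdNormalCDF a) := by
    rw [hP0F, ← hPv]; exact h
  have hcore := core_axis d (lt_of_lt_of_le one_pos (by exact_mod_cast hd) |>.trans_le le_rfl)
    σ s hσ hs0 i0 (WithLp.toLp 2 ⁻¹' F) (hFm.preimage (WithLp.measurable_toLp 2 _)) a (by rw [← hP0]; exact h1)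
  -- identify P_w E with P_{s e0} F
  set T2 : Set (EuclideanSpace ℝ (Fin d)) := (fun x => x + w) ⁻¹' E with hT2
  have hT2m : MeasurableSet T2 := hE.preimage (measurable_add_const w)
  have hPw : (Measure.pi fun i => gaussianReal (w i) ⟨σ ^ 2, sq_nonneg σ⟩ :
      Measure (Fin d → ℝ)) (WithLp.toLp 2 ⁻¹' E) = P0 (WithLp.toLp 2 ⁻¹' T2) := by
    rw [pi_map_add d σ w, hP0, hT2]
    exact Measure.map_apply (measurable_add_const _) (hE.preimage (WithLp.measurable_toLp 2 _))
  have hT2' : f ⁻¹' T2 = (fun x => x + s • e) ⁻¹' F := by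
    ext x
    simp only [Set.mem_preimage, hT2, hFdef, hT1]
    have : f x + w = f (x + s • e) + v := by
      rw [map_add, hf, hδ]; abel
    constructor
    · intro hx; rw [← this]; exact hx
    · intro hx; rw [this]; exact hx
  have hP0T2 : P0 (WithLp.toLp 2 ⁻¹' T2) = (Measure.pi fun i =>
      gaussianReal ((s • EuclideanSpace.single i0 (1:ℝ)) i) ⟨σ ^ 2, sq_nonneg σ⟩ :
      Measure (Fin d → ℝ)) (WithLp.toLp 2 ⁻¹' F) := by
    have e1 : P0 (WithLp.toLp 2 ⁻¹' T2) = P0 (WithLp.toLp 2 ⁻¹' (f ⁻¹' T2)) := by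
      rw [hP0]; exact (rot_inv d σ hσ f T2 hT2m).symm
    have e2 : P0 (WithLp.toLp 2 ⁻¹' ((fun x => x + s • e) ⁻¹' F))
        = (Measure.pi fun i =>
            gaussianReal ((s • EuclideanSpace.single i0 (1:ℝ)) i) ⟨σ ^ 2, sq_nonneg σ⟩ :
            Measure (Fin d → ℝ)) (WithLp.toLp 2 ⁻¹' F) := by
      rw [pi_map_add d σ (s • EuclideanSpace.single i0 (1:ℝ)), hP0]
      exact (Measure.map_apply (measurable_add_const _)
        (hFm.preimage (WithLp.measurable_toLp 2 _))).symm
    rw [e1, hT2', ← e2]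
  have hmono : ENNReal.ofReal (stdNormalCDF (a - r / σ))
      ≤ ENNReal.ofReal (stdNormalCDF (a - s / σ)) := by
    refine ENNReal.ofReal_le_ofReal (stdNormalCDF_mono ?_)
    have : s / σ ≤ r / σ := by gcongr
    linarith
  calc ENNReal.ofReal (stdNormalCDF (a - r / σ))
      ≤ ENNReal.ofReal (stdNormalCDF (a - s / σ)) := hmono
    _ ≤ (Measure.pi fun i =>
          gaussianReal ((s • EuclideanSpace.single i0 (1:ℝ)) i) ⟨σ ^ 2, sq_nonneg σ⟩ :
          Measure (Fin d → ℝ)) (WithLp.toLp 2 ⁻¹' F) := hcore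
    _ = P0 (WithLp.toLp 2 ⁻¹' T2) := hP0T2.symm
    _ = _ := hPw.symm
end

section
/- (Gaussian hypothesis-testing dominance, anisotropic case.) Let d ≥ 1 and σ₁, …, σ_d > 0, and for v ∈ ℝ^d let P_v denote the Gaussian product measure on ℝ^d whose i-th coordinate is the Gaussian measure on ℝ with mean v_i and variance σ_i². Let Φ(t) denote the standard normal CDF, Φ(t) = (2π)^{−1/2}·∫_{−∞}^t e^{−u²/2} du. Then for all v, w ∈ ℝ^d, every Borel set E ⊆ ℝ^d, and every a ∈ ℝ: if P_v(E) ≥ Φ(a) then P_w(E) ≥ Φ(a − μ), where μ = √(∑_{i=1}^d (v_i − w_i)²/σ_i²). -/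
open MeasureTheory ProbabilityTheory

section GDomAux

open Real
open scoped ENNReal NNReal

noncomputable def sq' (c : ℝ) : ℝ≥0 := ⟨c ^ 2, sq_nonneg c⟩

lemma pdf_mul (a b z x : ℝ) {s t : ℝ≥0} (hs : s ≠ 0) (ht : t ≠ 0) :
    gaussianPDFReal a s x * gaussianPDFReal b t (z - x) =
      gaussianPDFReal (a + b) (s + t) z *
        gaussianPDFReal (a + s * (z - a - b) / (s + t)) (s * t / (s + t)) x := by
  have hS : (0:ℝ) < s := by positivity
  have hT : (0:ℝ) < t := by positivity
  have hST : (0:ℝ) < (s:ℝ) + t := by linarith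
  have hpi : (0:ℝ) < 2 * π := by positivity
  simp only [gaussianPDFReal, NNReal.coe_add, NNReal.coe_mul, NNReal.coe_div]
  rw [mul_mul_mul_comm, mul_mul_mul_comm ((√(2 * π * ((s:ℝ)+t)))⁻¹)]
  congr 1
  · rw [← mul_inv, ← mul_inv, ← Real.sqrt_mul (by positivity), ← Real.sqrt_mul (by positivity)]
    congr 1
    field_simp
  · rw [← Real.exp_add, ← Real.exp_add]
    congr 1
    field_simp
    ring

lemma gaussianReal_conv (a b : ℝ) (s t : ℝ≥0) :
    Measure.map (fun p : ℝ × ℝ => p.1 + p.2) ((gaussianReal a s).prod (gaussianReal b t))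
      = gaussianReal (a + b) (s + t) := by
  by_cases hs : s = 0
  · subst hs
    rw [gaussianReal_zero_var, Measure.dirac_prod, Measure.map_map (by fun_prop) (by fun_prop)]
    simpa [Function.comp_def, add_comm] using gaussianReal_map_const_add (μ := b) (v := t) a
  by_cases ht : t = 0
  · subst ht
    rw [gaussianReal_zero_var, Measure.prod_dirac, Measure.map_map (by fun_prop) (by fun_prop)]
    simpa [Function.comp_def] using gaussianReal_map_add_const (μ := a) (v := s) b
  have hst : s + t ≠ 0 := by positivity
  have hu : s * t / (s + t) ≠ 0 := by positivity
  ext E hE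
  rw [Measure.map_apply (by fun_prop) hE,
    Measure.prod_apply (show MeasurableSet ((fun p : ℝ × ℝ => p.1 + p.2) ⁻¹' E) from (measurable_fst.add measurable_snd) hE)]
  have inner : ∀ x : ℝ, gaussianReal b t (Prod.mk x ⁻¹' ((fun p : ℝ × ℝ => p.1 + p.2) ⁻¹' E))
      = ∫⁻ z in E, gaussianPDF b t (z - x) ∂volume := by
    intro x
    have hmap : Measure.map (· + x) (volume : Measure ℝ) = volume :=
      map_add_right_eq_self volume x
    rw [gaussianReal_apply _ ht]
    conv_rhs => rw [← hmap]
    rw [setLIntegral_map (f := fun z => gaussianPDF b t (z - x)) hE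
      ((measurable_gaussianPDF b t).comp (measurable_sub_const x)) (measurable_add_const x)]
    simp only [add_sub_cancel_right]
    have hset : Prod.mk x ⁻¹' ((fun p : ℝ × ℝ => p.1 + p.2) ⁻¹' E) = (fun y => y + x) ⁻¹' E := by
      ext y
      simp [add_comm]
    rw [hset]
  simp_rw [inner]
  rw [gaussianReal_of_var_ne_zero _ hs]
  have hmeas2 : Measurable (Function.uncurry fun x z : ℝ => gaussianPDF b t (z - x)) := by
    apply (measurable_gaussianPDF b t).comp
    fun_prop
  rw [lintegral_withDensity_eq_lintegral_mul _ (measurable_gaussianPDF a s)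
    (Measurable.lintegral_prod_right' (f := fun q : ℝ × ℝ => gaussianPDF b t (q.2 - q.1)) (by fun_prop))]
  simp only [Pi.mul_apply]
  have step3 : ∀ x : ℝ, gaussianPDF a s x * ∫⁻ z in E, gaussianPDF b t (z - x) ∂volume
      = ∫⁻ z in E, gaussianPDF a s x * gaussianPDF b t (z - x) ∂volume := by
    intro x
    rw [lintegral_const_mul (f := fun z => gaussianPDF b t (z - x)) _
      ((measurable_gaussianPDF b t).comp (measurable_sub_const x))]
  simp_rw [step3]
  have hswap : AEMeasurable
      (Function.uncurry fun x z : ℝ => gaussianPDF a s x * gaussianPDF b t (z - x))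
      ((volume : Measure ℝ).prod (volume.restrict E)) :=
    (((measurable_gaussianPDF a s).comp measurable_fst).mul
      ((measurable_gaussianPDF b t).comp (measurable_snd.sub measurable_fst))).aemeasurable
  rw [lintegral_lintegral_swap hswap]
  have step5 : ∀ z : ℝ, ∫⁻ x, gaussianPDF a s x * gaussianPDF b t (z - x) ∂volume
      = gaussianPDF (a + b) (s + t) z := by
    intro z
    have key : ∀ x : ℝ, gaussianPDF a s x * gaussianPDF b t (z - x)
        = gaussianPDF (a + b) (s + t) z *
          gaussianPDF (a + s * (z - a - b) / (s + t)) (s * t / (s + t)) x := by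
      intro x
      simp only [gaussianPDF]
      rw [← ENNReal.ofReal_mul (gaussianPDFReal_nonneg _ _ _),
        ← ENNReal.ofReal_mul (gaussianPDFReal_nonneg _ _ _), pdf_mul a b z x hs ht]
    simp_rw [key]
    rw [lintegral_const_mul _ (measurable_gaussianPDF _ _), lintegral_gaussianPDF_eq_one _ hu,
      mul_one]
  simp_rw [step5]
  rw [← gaussianReal_apply _ hst]

lemma map_sum_gaussian (n : ℕ) (c m : Fin n → ℝ) (s : Fin n → ℝ≥0) :
    Measure.map (fun x : Fin n → ℝ => ∑ i, c i * x i)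
        (Measure.pi fun i => gaussianReal (m i) (s i))
      = gaussianReal (∑ i, c i * m i) (∑ i, sq' (c i) * s i) := by
  induction n with
  | zero =>
      have : (fun x : Fin 0 → ℝ => ∑ i, c i * x i) = fun _ => (0 : ℝ) := by
        funext x; simp
      rw [this, Measure.map_const]
      simp [gaussianReal_zero_var]
  | succ n ih =>
      set e := MeasurableEquiv.piFinSuccAbove (fun _ : Fin (n + 1) => ℝ) 0 with he
      have hmp := measurePreserving_piFinSuccAbove
        (fun i : Fin (n + 1) => gaussianReal (m i) (s i)) 0
      set G : ℝ × (Fin n → ℝ) → ℝ :=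
        fun p => c 0 * p.1 + ∑ j, c (Fin.succ j) * p.2 j with hG
      have hFG : (fun x : Fin (n + 1) → ℝ => ∑ i, c i * x i) = G ∘ e := by
        funext x
        simp [hG, he, Fin.sum_univ_succ, MeasurableEquiv.piFinSuccAbove,
          Fin.removeNth, Fin.succAbove_zero, Fin.tail]
      rw [hFG, ← Measure.map_map (by fun_prop) e.measurable, hmp.map_eq]
      have hG2 : G = (fun p : ℝ × ℝ => p.1 + p.2) ∘
          Prod.map (fun y : ℝ => c 0 * y) (fun y : Fin n → ℝ => ∑ j, c (Fin.succ j) * y j) := by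
        funext p; simp [hG]
      rw [hG2, ← Measure.map_map (by fun_prop) (by fun_prop),
        ← Measure.map_prod_map _ _ (by fun_prop) (by fun_prop)]
      simp only [Fin.zero_succAbove]
      rw [gaussianReal_map_const_mul, ih (fun j => c (Fin.succ j)) (fun j => m (Fin.succ j))
          (fun j => s (Fin.succ j)), gaussianReal_conv]
      congr 1
      · rw [Fin.sum_univ_succ]
      · rw [Fin.sum_univ_succ]
        rfl

lemma stdNormal_Iic (r : ℝ) : gaussianReal 0 1 (Set.Iic r) = ENNReal.ofReal (stdNormalCDF r) := by
  rw [gaussianReal_apply_eq_integral _ one_ne_zero, stdNormalCDF]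
  congr 1
  refine setIntegral_congr_fun measurableSet_Iic fun x _ => ?_
  simp [gaussianPDFReal, neg_div]

lemma gauss_Iic (m r : ℝ) {s : ℝ≥0} (hs : s ≠ 0) :
    gaussianReal m s (Set.Iic r)
      = ENNReal.ofReal (stdNormalCDF ((r - m) / Real.sqrt s)) := by
  have hs' : (0:ℝ) < s := by positivity
  have hsq : (0:ℝ) < Real.sqrt s := Real.sqrt_pos.mpr hs'
  have h1 : (⟨(Real.sqrt s) ^ 2, sq_nonneg _⟩ : ℝ≥0) * 1 = s := by
    ext; simp [Real.sq_sqrt hs'.le]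
  have h2 : gaussianReal m s
      = Measure.map (· + m) (Measure.map (Real.sqrt s * ·) (gaussianReal 0 1)) := by
    rw [gaussianReal_map_const_mul, gaussianReal_map_add_const, mul_zero, zero_add]
    congr 1; ext; simp [Real.sq_sqrt hs'.le]
  rw [h2, Measure.map_apply (by fun_prop) measurableSet_Iic]
  have h3 : (· + m) ⁻¹' Set.Iic r = Set.Iic (r - m) := by
    ext y; simp [le_sub_iff_add_le]
  rw [h3, Measure.map_apply (by fun_prop) measurableSet_Iic]
  have h4 : (Real.sqrt s * ·) ⁻¹' Set.Iic (r - m) = Set.Iic ((r - m) / Real.sqrt s) := by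
    ext y
    simp only [Set.mem_preimage, Set.mem_Iic]
    rw [le_div_iff₀ hsq, mul_comm]
  rw [h4, stdNormal_Iic]

lemma lintegral_pi_prod {n : ℕ} (f : Fin n → ℝ → ℝ≥0∞) (hf : ∀ i, Measurable (f i)) :
    ∫⁻ x, ∏ i, f i (x i) ∂(Measure.pi fun _ => (volume : Measure ℝ))
      = ∏ i, ∫⁻ y, f i y := by
  induction n with
  | zero =>
      simp only [Finset.univ_eq_empty, Finset.prod_empty, lintegral_const, one_mul]
      rw [Measure.pi_univ]
      simp
  | succ n ih =>
      have hmp := measurePreserving_piFinSuccAbove (fun _ : Fin (n + 1) => (volume : Measure ℝ)) 0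
      set g : ℝ × (Fin n → ℝ) → ℝ≥0∞ :=
        fun p => f 0 p.1 * ∏ j, f (Fin.succ j) (p.2 j) with hg
      have hgm : Measurable g := by
        apply ((hf 0).comp measurable_fst).mul
        exact Finset.measurable_prod _ fun j _ => (hf _).comp ((measurable_pi_apply j).comp measurable_snd)
      have key : ∀ x : Fin (n + 1) → ℝ, ∏ i, f i (x i)
          = g (MeasurableEquiv.piFinSuccAbove (fun _ => ℝ) 0 x) := by
        intro x
        simp [hg, Fin.prod_univ_succ, MeasurableEquiv.piFinSuccAbove, Fin.removeNth,
          Fin.succAbove_zero, Fin.tail]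
      simp_rw [key]
      rw [hmp.lintegral_comp hgm, hg]
      simp only [Fin.zero_succAbove]
      rw [lintegral_prod_mul (f := f 0) (g := fun y : Fin n → ℝ => ∏ j, f (Fin.succ j) (y j)) ((hf 0).aemeasurable)
        ((Finset.measurable_prod _ fun j _ => (hf _).comp (measurable_pi_apply j)).aemeasurable),
        ih (fun j => f (Fin.succ j)) (fun j => hf _), Fin.prod_univ_succ]

lemma pi_gauss_eq {n : ℕ} (m : Fin n → ℝ) (s : Fin n → ℝ≥0) (hs : ∀ i, s i ≠ 0) :
    Measure.pi (fun i => gaussianReal (m i) (s i)) =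
      (volume : Measure (Fin n → ℝ)).withDensity
        (fun x => ∏ i, gaussianPDF (m i) (s i) (x i)) := by
  refine Measure.pi_eq fun t ht => ?_
  rw [withDensity_apply _ (MeasurableSet.univ_pi ht),
    ← lintegral_indicator (MeasurableSet.univ_pi ht) _]
  have key : ∀ x : Fin n → ℝ, (Set.pi Set.univ t).indicator
        (fun x => ∏ i, gaussianPDF (m i) (s i) (x i)) x
      = ∏ i, (t i).indicator (gaussianPDF (m i) (s i)) (x i) := by
    intro x
    by_cases hx : x ∈ Set.pi Set.univ t
    · rw [Set.indicator_of_mem hx]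
      exact Finset.prod_congr rfl fun i _ =>
        (Set.indicator_of_mem (hx i (Set.mem_univ i)) _).symm
    · rw [Set.indicator_of_notMem hx]
      rw [Set.mem_univ_pi] at hx
      push_neg at hx
      obtain ⟨i, hi⟩ := hx
      exact (Finset.prod_eq_zero (Finset.mem_univ i) (Set.indicator_of_notMem hi _)).symm
  simp_rw [key]
  rw [volume_pi, lintegral_pi_prod _ (fun i => (measurable_gaussianPDF _ _).indicator (ht i))]
  refine Finset.prod_congr rfl fun i _ => ?_
  rw [lintegral_indicator (ht i) _, ← gaussianReal_apply _ (hs i)]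

end GDomAux

open Real
open scoped ENNReal NNReal

/-- Gaussian hypothesis-testing dominance, anisotropic case: for the Gaussian product
measure `P_v` on `ℝ^d` whose `i`-th coordinate has mean `v i` and variance `σ i ^ 2`,
if `P_v E ≥ Φ(a)` then `P_w E ≥ Φ(a - μ)` with `μ = √(∑ i, (v i - w i)² / σ i ^ 2)`. -/
theorem gaussian_dominance_anisotropic (d : ℕ) (hd : 1 ≤ d) (σ : Fin d → ℝ)
    (hσ : ∀ i, 0 < σ i) (v w : Fin d → ℝ)
    (E : Set (Fin d → ℝ)) (hE : MeasurableSet E) (a : ℝ)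
    (h : (Measure.pi fun i => gaussianReal (v i) ⟨σ i ^ 2, sq_nonneg (σ i)⟩) E
          ≥ ENNReal.ofReal (stdNormalCDF a)) :
    (Measure.pi fun i => gaussianReal (w i) ⟨σ i ^ 2, sq_nonneg (σ i)⟩) E
      ≥ ENNReal.ofReal
          (stdNormalCDF (a - Real.sqrt (∑ i, (v i - w i) ^ 2 / σ i ^ 2))) := by
  set s : Fin d → ℝ≥0 := fun i => ⟨σ i ^ 2, sq_nonneg (σ i)⟩ with hs_def
  have hσ0 : ∀ i, σ i ^ 2 ≠ 0 := fun i => (pow_pos (hσ i) 2).ne'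
  have hs : ∀ i, s i ≠ 0 := fun i => by
    rw [← NNReal.coe_ne_zero]; exact hσ0 i
  set M2 : ℝ := ∑ i, (v i - w i) ^ 2 / σ i ^ 2 with hM2_def
  have hM2nonneg : 0 ≤ M2 := Finset.sum_nonneg fun i _ => by positivity
  by_cases hM2 : M2 = 0
  · -- degenerate case : v = w
    have hvw : v = w := by
      funext i
      have hterm : (v i - w i) ^ 2 / σ i ^ 2 = 0 := by
        have := (Finset.sum_eq_zero_iff_of_nonneg (fun i _ => by positivity)).mp hM2
        exact this i (Finset.mem_univ i)
      have hzero : (v i - w i) ^ 2 = 0 := by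
        rcases div_eq_zero_iff.mp hterm with h0 | h0
        · exact h0
        · exact absurd h0 (hσ0 i)
      have := (pow_eq_zero_iff (by norm_num : (2:ℕ) ≠ 0)).mp hzero
      linarith
    rw [hM2, Real.sqrt_zero, sub_zero]
    rw [hvw] at h
    exact h
  have hM2pos : 0 < M2 := lt_of_le_of_ne hM2nonneg (Ne.symm hM2)
  set μ : ℝ := Real.sqrt M2 with hμ_def
  have hμpos : 0 < μ := Real.sqrt_pos.mpr hM2pos
  have hμsq : μ ^ 2 = M2 := Real.sq_sqrt hM2nonneg
  set c : Fin d → ℝ := fun i => (w i - v i) / σ i ^ 2 with hc_def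
  set L : (Fin d → ℝ) → ℝ := fun x => ∑ i, c i * x i with hL_def
  have hLmeas : Measurable L :=
    Finset.measurable_sum _ fun i _ => by fun_prop
  set τ : ℝ≥0 := ∑ i, sq' (c i) * s i with hτ_def
  have hτcoe : (τ : ℝ) = M2 := by
    push_cast [hτ_def]
    refine Finset.sum_congr rfl fun i _ => ?_
    show c i ^ 2 * σ i ^ 2 = (v i - w i) ^ 2 / σ i ^ 2
    simp only [hc_def]
    field_simp [(hσ i).ne']
    ring
  have hτ : τ ≠ 0 := by
    rw [← NNReal.coe_ne_zero, hτcoe]; exact hM2pos.ne'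
  have hsqrtτ : Real.sqrt τ = μ := by rw [hτcoe]
  set mv : ℝ := ∑ i, c i * v i with hmv_def
  set mw : ℝ := ∑ i, c i * w i with hmw_def
  have hmwv : mw - mv = M2 := by
    rw [hmv_def, hmw_def, ← Finset.sum_sub_distrib]
    refine Finset.sum_congr rfl fun i _ => ?_
    show c i * w i - c i * v i = (v i - w i) ^ 2 / σ i ^ 2
    simp only [hc_def]
    field_simp [(hσ i).ne']
    ring
  set Pv := Measure.pi fun i => gaussianReal (v i) (s i) with hPv_def
  set Pw := Measure.pi fun i => gaussianReal (w i) (s i) with hPw_def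
  set r : ℝ := mv + μ * a with hr_def
  set A : Set (Fin d → ℝ) := L ⁻¹' Set.Iic r with hA_def
  have hA : MeasurableSet A := hLmeas measurableSet_Iic
  have hmapv : Measure.map L Pv = gaussianReal mv τ := map_sum_gaussian d c v s
  have hmapw : Measure.map L Pw = gaussianReal mw τ := map_sum_gaussian d c w s
  have hPvA : Pv A = ENNReal.ofReal (stdNormalCDF a) := by
    rw [hA_def, ← Measure.map_apply hLmeas measurableSet_Iic, hmapv, gauss_Iic _ _ hτ, hsqrtτ]
    congr 2
    rw [hr_def]
    field_simp
    ring
  have hPwA : Pw A = ENNReal.ofReal (stdNormalCDF (a - μ)) := by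
    rw [hA_def, ← Measure.map_apply hLmeas measurableSet_Iic, hmapw, gauss_Iic _ _ hτ, hsqrtτ]
    congr 2
    rw [hr_def]
    have : mv + μ * a - mw = μ * a - M2 := by rw [← hmwv]; ring
    rw [this, ← hμsq]
    field_simp
  -- density of Pw with respect to Pv
  set K : ℝ := ∑ i, c i * (v i + w i) / 2 with hK_def
  set f : (Fin d → ℝ) → ℝ≥0∞ := fun x => ENNReal.ofReal (Real.exp (L x - K)) with hf_def
  have hfmeas : Measurable f :=
    ENNReal.measurable_ofReal.comp (Real.measurable_exp.comp (hLmeas.sub measurable_const))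
  have factor : ∀ (i : Fin d) (y : ℝ), gaussianPDFReal (w i) (s i) y
      = gaussianPDFReal (v i) (s i) y * Real.exp (c i * y - c i * (v i + w i) / 2) := by
    intro i y
    have hexpo : -(y - w i) ^ 2 / (2 * (s i : ℝ))
        = -(y - v i) ^ 2 / (2 * (s i : ℝ)) + (c i * y - c i * (v i + w i) / 2) := by
      have hcoe : ((s i : ℝ)) = σ i ^ 2 := rfl
      rw [hcoe]
      simp only [hc_def]
      field_simp [(hσ i).ne']
      ring
    simp only [gaussianPDFReal]
    rw [hexpo, Real.exp_add, ← mul_assoc]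
  have hpdf : ∀ x : Fin d → ℝ, (∏ i, gaussianPDF (w i) (s i) (x i))
      = (∏ i, gaussianPDF (v i) (s i) (x i)) * f x := by
    intro x
    have h1 : ∀ i : Fin d, gaussianPDF (w i) (s i) (x i)
        = gaussianPDF (v i) (s i) (x i)
          * ENNReal.ofReal (Real.exp (c i * x i - c i * (v i + w i) / 2)) := by
      intro i
      rw [gaussianPDF, gaussianPDF, factor i (x i),
        ENNReal.ofReal_mul (gaussianPDFReal_nonneg _ _ _)]
    simp_rw [h1]
    rw [Finset.prod_mul_distrib, hf_def]
    congr 1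
    rw [← ENNReal.ofReal_prod_of_nonneg (fun i _ => (Real.exp_nonneg _)), ← Real.exp_sum]
    congr 1
    rw [Finset.sum_sub_distrib, hL_def, hK_def]
  have hPwd : Pw = Pv.withDensity f := by
    rw [hPw_def, hPv_def, pi_gauss_eq w s hs, pi_gauss_eq v s hs, ← withDensity_mul]
    · congr 1
      funext x
      exact hpdf x
    · exact Finset.measurable_prod _ fun i _ =>
        (measurable_gaussianPDF _ _).comp (measurable_pi_apply i)
    · exact hfmeas
  have hPwS : ∀ S : Set (Fin d → ℝ), MeasurableSet S → Pw S = ∫⁻ x in S, f x ∂Pv := by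
    intro S hS
    rw [hPwd, withDensity_apply _ hS]
  set κ : ℝ≥0∞ := ENNReal.ofReal (Real.exp (r - K)) with hκ_def
  have bound1 : Pw (A \ E) ≤ κ * Pv (A \ E) := by
    rw [hPwS _ (hA.diff hE)]
    calc ∫⁻ x in A \ E, f x ∂Pv ≤ ∫⁻ _ in A \ E, κ ∂Pv := by
          refine setLIntegral_mono measurable_const fun x hx => ?_
          exact ENNReal.ofReal_le_ofReal (Real.exp_le_exp.mpr (by
            have : L x ≤ r := hx.1
            linarith))
      _ = κ * Pv (A \ E) := by rw [setLIntegral_const]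
  have bound2 : κ * Pv (E \ A) ≤ Pw (E \ A) := by
    rw [hPwS _ (hE.diff hA)]
    calc κ * Pv (E \ A) = ∫⁻ _ in E \ A, κ ∂Pv := by rw [setLIntegral_const]
      _ ≤ ∫⁻ x in E \ A, f x ∂Pv := by
          refine setLIntegral_mono hfmeas fun x hx => ?_
          refine ENNReal.ofReal_le_ofReal (Real.exp_le_exp.mpr ?_)
          have : ¬ (L x ≤ r) := hx.2
          linarith [lt_of_not_ge this]
  have bound3 : Pv (A \ E) ≤ Pv (E \ A) := by
    have h1 : Pv (A ∩ E) + Pv (A \ E) = Pv A := measure_inter_add_diff A hE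
    have h2 : Pv (A ∩ E) + Pv (E \ A) = Pv E := by
      rw [Set.inter_comm]; exact measure_inter_add_diff E hA
    have hle : Pv A ≤ Pv E := by rw [hPvA]; exact h
    rw [← h1, ← h2] at hle
    exact (ENNReal.add_le_add_iff_left (measure_ne_top _ _)).mp hle
  calc ENNReal.ofReal (stdNormalCDF (a - μ)) = Pw A := hPwA.symm
    _ = Pw (A ∩ E) + Pw (A \ E) := (measure_inter_add_diff A hE).symm
    _ ≤ Pw (A ∩ E) + κ * Pv (A \ E) := add_le_add_right bound1 _
    _ ≤ Pw (A ∩ E) + κ * Pv (E \ A) := add_le_add_right (mul_le_mul_right bound3 κ) _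
    _ ≤ Pw (A ∩ E) + Pw (E \ A) := add_le_add_right bound2 _
    _ = Pw (E ∩ A) + Pw (E \ A) := by rw [Set.inter_comm]
    _ = Pw E := measure_inter_add_diff E hA
end

section
/- (Non-adaptive composition of smoothing mechanisms.) Let d ≥ 1, k ≥ 1, and σ₁, …, σ_k > 0, and for x ∈ ℝ^d let P_x denote the product measure on (ℝ^d)^k whose i-th block is the Gaussian product measure on ℝ^d with mean x and coordinate variance σ_i² (i.e., the joint law of (x + Z₁, …, x + Z_k) with independent Z_i ∼ N(0, σ_i²·I_d)). Let Φ(t) denote the standard normal CDF, Φ(t) = (2π)^{−1/2}·∫_{−∞}^t e^{−u²/2} du. Then for all x, e ∈ ℝ^d, every Borel set E ⊆ (ℝ^d)^k, and every a ∈ ℝ: if P_x(E) ≥ Φ(a) then P_{x+e}(E) ≥ Φ(a − ‖e‖₂·√(∑_{i=1}^k 1/σ_i²)). -/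
open MeasureTheory ProbabilityTheory

section ARSAux

set_option maxHeartbeats 1000000

open Real ENNReal NNReal Set

@[simp] lemma my_coe_subtype_mk (a : ℝ) (ha : 0 ≤ a) : ((⟨a, ha⟩ : ℝ≥0) : ℝ) = a := rfl

lemma my_pdf_conv (v₁ v₂ : ℝ≥0) (hv₁ : v₁ ≠ 0) (hv₂ : v₂ ≠ 0) (m₁ m₂ x y : ℝ) :
    gaussianPDFReal m₂ v₂ (y - x) * gaussianPDFReal m₁ v₁ x
      = gaussianPDFReal (m₁ + m₂) (v₁ + v₂) y *
        gaussianPDFReal (((v₁:ℝ) * (y - m₂) + (v₂:ℝ) * m₁) / (v₁ + v₂))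
          (NNReal.mk ((v₁:ℝ) * v₂ / (v₁ + v₂)) (by positivity)) x := by
  have h1 : (0:ℝ) < v₁ := lt_of_le_of_ne (v₁.coe_nonneg) (by exact_mod_cast (Ne.symm hv₁))
  have h2 : (0:ℝ) < v₂ := lt_of_le_of_ne (v₂.coe_nonneg) (by exact_mod_cast (Ne.symm hv₂))
  have hs : (0:ℝ) < (v₁:ℝ) + v₂ := by linarith
  simp only [gaussianPDFReal, NNReal.coe_mk, my_coe_subtype_mk, NNReal.coe_add]
  rw [mul_mul_mul_comm, ← Real.exp_add]
  conv_rhs => rw [mul_mul_mul_comm, ← Real.exp_add]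
  congr 1
  · rw [← mul_inv, ← mul_inv, ← Real.sqrt_mul (by positivity), ← Real.sqrt_mul (by positivity)]
    congr 2
    field_simp
  · congr 1
    field_simp
    ring

lemma my_gauss_conv (m₁ m₂ : ℝ) (v₁ v₂ : ℝ≥0) :
    ((gaussianReal m₁ v₁).prod (gaussianReal m₂ v₂)).map (fun p : ℝ × ℝ => p.1 + p.2)
      = gaussianReal (m₁ + m₂) (v₁ + v₂) := by
  by_cases hv₁ : v₁ = 0
  · subst hv₁
    rw [gaussianReal_zero_var, Measure.dirac_prod,
      Measure.map_map measurable_add measurable_prodMk_left]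
    simpa [add_comm, Function.comp_def] using gaussianReal_map_const_add (μ := m₂) (v := v₂) m₁
  by_cases hv₂ : v₂ = 0
  · subst hv₂
    rw [gaussianReal_zero_var, Measure.prod_dirac,
      Measure.map_map measurable_add measurable_prodMk_right]
    simpa [Function.comp_def] using gaussianReal_map_add_const (μ := m₁) (v := v₁) m₂
  -- main case
  have hv : v₁ + v₂ ≠ 0 := by simp [hv₁]
  ext s hs
  rw [Measure.map_apply measurable_add hs,
    Measure.prod_apply (measurable_add hs)]
  have hinner : ∀ x : ℝ, (gaussianReal m₂ v₂) (Prod.mk x ⁻¹' ((fun p : ℝ × ℝ => p.1 + p.2) ⁻¹' s))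
      = ∫⁻ y in s, gaussianPDF m₂ v₂ (y - x) := by
    intro x
    have h1 : (Prod.mk x ⁻¹' ((fun p : ℝ × ℝ => p.1 + p.2) ⁻¹' s)) = (fun y => y + x) ⁻¹' s := by
      ext y; simp [add_comm]
    have h2 : (gaussianReal m₂ v₂) ((fun y => y + x) ⁻¹' s)
        = ((gaussianReal m₂ v₂).map (· + x)) s :=
      (Measure.map_apply (measurable_add_const x) hs).symm
    rw [h1, h2, gaussianReal_map_add_const, gaussianReal_apply _ hv₂]
    refine setLIntegral_congr_fun hs (fun y _ => ?_)
    rw [gaussianPDF, gaussianPDF, gaussianPDFReal_sub]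
  simp_rw [hinner]
  have hm2 : ∀ x : ℝ, Measurable fun y : ℝ => gaussianPDF m₂ v₂ (y - x) := fun x =>
    ((measurable_gaussianPDFReal m₂ v₂).comp (measurable_sub_const x)).ennreal_ofReal
  have hm2' : Measurable (Function.uncurry fun x y : ℝ => gaussianPDF m₂ v₂ (y - x)) :=
    ((measurable_gaussianPDFReal m₂ v₂).comp (measurable_snd.sub measurable_fst)).ennreal_ofReal
  rw [gaussianReal_apply _ hv, gaussianReal_of_var_ne_zero _ hv₁,
    lintegral_withDensity_eq_lintegral_mul _ (measurable_gaussianPDF _ _)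
      (Measurable.lintegral_prod_right (f := fun x y => gaussianPDF m₂ v₂ (y - x)) hm2')]
  simp only [Pi.mul_apply]
  calc ∫⁻ x, gaussianPDF m₁ v₁ x * ∫⁻ y in s, gaussianPDF m₂ v₂ (y - x) ∂volume
      = ∫⁻ x, ∫⁻ y in s, gaussianPDF m₁ v₁ x * gaussianPDF m₂ v₂ (y - x) ∂volume := by
        congr 1; ext x
        rw [lintegral_const_mul _ (hm2 x)]
    _ = ∫⁻ y in s, ∫⁻ x, gaussianPDF m₁ v₁ x * gaussianPDF m₂ v₂ (y - x) ∂volume := by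
        apply lintegral_lintegral_swap
        apply Measurable.aemeasurable
        exact (((measurable_gaussianPDFReal m₁ v₁).comp measurable_fst).ennreal_ofReal).mul
          (((measurable_gaussianPDFReal m₂ v₂).comp
            (measurable_snd.sub measurable_fst)).ennreal_ofReal)
    _ = ∫⁻ y in s, gaussianPDF (m₁ + m₂) (v₁ + v₂) y := by
        refine setLIntegral_congr_fun hs (fun y _ => ?_)
        have key : ∀ x : ℝ, gaussianPDF m₁ v₁ x * gaussianPDF m₂ v₂ (y - x)
            = gaussianPDF (m₁ + m₂) (v₁ + v₂) y *
              gaussianPDF (((v₁:ℝ) * (y - m₂) + (v₂:ℝ) * m₁) / (v₁ + v₂))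
                (NNReal.mk ((v₁:ℝ) * v₂ / (v₁ + v₂)) (by positivity)) x := by
          intro x
          simp only [gaussianPDF]
          rw [← ENNReal.ofReal_mul (gaussianPDFReal_nonneg _ _ _),
            ← ENNReal.ofReal_mul (gaussianPDFReal_nonneg _ _ _), mul_comm
              (gaussianPDFReal m₁ v₁ x), my_pdf_conv v₁ v₂ hv₁ hv₂ m₁ m₂ x y]
        simp_rw [key]
        have hw : (NNReal.mk ((v₁:ℝ) * v₂ / (v₁ + v₂)) (by positivity) : ℝ≥0) ≠ 0 := by
          have h1 : (0:ℝ) < v₁ := lt_of_le_of_ne (v₁.coe_nonneg) (by exact_mod_cast (Ne.symm hv₁))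
          have h2 : (0:ℝ) < v₂ := lt_of_le_of_ne (v₂.coe_nonneg) (by exact_mod_cast (Ne.symm hv₂))
          rw [← NNReal.coe_ne_zero]
          simp only [NNReal.coe_mk, my_coe_subtype_mk]
          positivity
        rw [lintegral_const_mul _ (measurable_gaussianPDF _ _),
          lintegral_gaussianPDF_eq_one _ hw, mul_one]

lemma my_pi_map_sum {α : Type*} [MeasurableSpace α] :
    ∀ (n : ℕ) (μ : Fin n → Measure α), (∀ i, IsProbabilityMeasure (μ i)) →
    ∀ (f : Fin n → α → ℝ), (∀ i, Measurable (f i)) →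
    ∀ (m : Fin n → ℝ) (v : Fin n → ℝ≥0), (∀ i, (μ i).map (f i) = gaussianReal (m i) (v i)) →
    (Measure.pi μ).map (fun y => ∑ i, f i (y i)) = gaussianReal (∑ i, m i) (∑ i, v i) := by
  intro n
  induction n with
  | zero =>
    intro μ hμ f hf m v h
    have : IsProbabilityMeasure (Measure.pi μ) := by infer_instance
    simp only [Finset.univ_eq_empty, Finset.sum_empty]
    rw [show (fun y : Fin 0 → α => (0:ℝ)) = fun _ => (0:ℝ) from rfl, Measure.map_const]
    simp [gaussianReal_zero_var]
  | succ n ih =>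
    intro μ hμ f hf m v h
    have hmp := measurePreserving_piFinSuccAbove μ 0
    set e := MeasurableEquiv.piFinSuccAbove (fun _ : Fin (n+1) => α) 0 with he
    set S : (Fin n → α) → ℝ := fun z => ∑ j : Fin n, f j.succ (z j) with hS
    have hSm : Measurable S :=
      Finset.measurable_sum _ (fun j _ => (hf j.succ).comp (measurable_pi_apply j))
    have hcomp : (fun y : Fin (n+1) → α => ∑ i, f i (y i))
        = (fun p : α × (Fin n → α) => f 0 p.1 + S p.2) ∘ e := by
      ext y
      simp only [Function.comp_apply, he, MeasurableEquiv.piFinSuccAbove_apply, hS]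
      rw [Fin.sum_univ_succ]
      simp [Fin.succAbove_zero, Fin.tail]
    have haddm : Measurable fun p : α × (Fin n → α) => f 0 p.1 + S p.2 :=
      ((hf 0).comp measurable_fst).add (hSm.comp measurable_snd)
    rw [hcomp, ← Measure.map_map haddm e.measurable, hmp.map_eq]
    have hrest : (fun j : Fin n => μ ((0 : Fin (n+1)).succAbove j)) = fun j => μ j.succ := by
      ext j : 1; rw [Fin.succAbove_zero]
    rw [show ((μ 0).prod <| Measure.pi fun j => μ ((0:Fin (n+1)).succAbove j))
        = (μ 0).prod (Measure.pi fun j => μ j.succ) by rw [hrest]]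
    have : ∀ i, IsProbabilityMeasure ((fun j : Fin n => μ j.succ) i) := fun i => hμ _
    have hrestlaw := ih (fun j => μ j.succ) this (fun j => f j.succ) (fun j => hf j.succ)
      (fun j => m j.succ) (fun j => v j.succ) (fun j => h j.succ)
    have hpm : (fun p : α × (Fin n → α) => f 0 p.1 + S p.2)
        = (fun q : ℝ × ℝ => q.1 + q.2) ∘ (Prod.map (f 0) S) := rfl
    rw [hpm, ← Measure.map_map measurable_add ((hf 0).prodMap hSm),
      ← Measure.map_prod_map _ _ (hf 0) hSm, h 0, hrestlaw, my_gauss_conv,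
      Fin.sum_univ_succ m, Fin.sum_univ_succ v]

lemma my_map_withDensity {α β : Type*} [MeasurableSpace α] [MeasurableSpace β]
    (μ : Measure α) (e : α ≃ᵐ β) (G : α → ℝ≥0∞) (hG : Measurable G) :
    (μ.withDensity G).map e = (μ.map e).withDensity (G ∘ e.symm) := by
  ext s hs
  rw [Measure.map_apply e.measurable hs, withDensity_apply _ (e.measurable hs),
    withDensity_apply _ hs, Measure.restrict_map e.measurable hs,
    lintegral_map (hG.comp e.symm.measurable) e.measurable]
  simp

lemma my_prod_withDensity {α β : Type*} [MeasurableSpace α] [MeasurableSpace β]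
    (μ : Measure α) (ν : Measure β) [SigmaFinite μ] [SigmaFinite ν]
    (g : α → ℝ≥0∞) (h : β → ℝ≥0∞) (hg : Measurable g) (hh : Measurable h)
    [SigmaFinite (μ.withDensity g)] [SigmaFinite (ν.withDensity h)] :
    (μ.withDensity g).prod (ν.withDensity h)
      = (μ.prod ν).withDensity (fun p => g p.1 * h p.2) := by
  refine Measure.prod_eq fun s t hs ht => ?_
  rw [withDensity_apply _ (hs.prod ht), ← Measure.prod_restrict,
    lintegral_prod_mul (hg.aemeasurable) (hh.aemeasurable),
    withDensity_apply _ hs, withDensity_apply _ ht]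

lemma my_pi_withDensity {α : Type*} [MeasurableSpace α] :
    ∀ (n : ℕ) (μ : Fin n → Measure α), (∀ i, IsProbabilityMeasure (μ i)) →
    ∀ (f : Fin n → α → ℝ≥0∞), (∀ i, Measurable (f i)) →
    (∀ i, IsProbabilityMeasure ((μ i).withDensity (f i))) →
    Measure.pi (fun i => (μ i).withDensity (f i))
      = (Measure.pi μ).withDensity (fun y => ∏ i, f i (y i)) := by
  intro n
  induction n with
  | zero =>
    intro μ hμ f hf hfp
    rw [show (fun y : Fin 0 → α => ∏ i : Fin 0, f i (y i)) = 1 by ext; simp,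
      withDensity_one]
    rw [Measure.pi_of_empty, Measure.pi_of_empty]
  | succ n ih =>
    intro μ hμ f hf hfp
    set ν : Fin (n+1) → Measure α := fun i => (μ i).withDensity (f i) with hν
    have : ∀ i, IsProbabilityMeasure (ν i) := hfp
    have hmpν := (measurePreserving_piFinSuccAbove ν 0).symm
      (MeasurableEquiv.piFinSuccAbove (fun _ : Fin (n+1) => α) 0)
    have hmpμ := (measurePreserving_piFinSuccAbove μ 0).symm
      (MeasurableEquiv.piFinSuccAbove (fun _ : Fin (n+1) => α) 0)
    set e := MeasurableEquiv.piFinSuccAbove (fun _ : Fin (n+1) => α) 0 with he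
    have hrest : ∀ (κ : Fin (n+1) → Measure α),
        (Measure.pi fun j : Fin n => κ ((0:Fin (n+1)).succAbove j))
          = Measure.pi (fun j : Fin n => κ j.succ) := by
      intro κ; simp [Fin.succAbove_zero]
    have hIH := ih (fun j => μ j.succ) (fun j => hμ _) (fun j => f j.succ)
      (fun j => hf j.succ) (fun j => hfp _)
    have hF'm : Measurable fun z : Fin n → α => ∏ j : Fin n, f j.succ (z j) :=
      Finset.measurable_prod _ (fun j _ => (hf j.succ).comp (measurable_pi_apply j))
    haveI : IsProbabilityMeasure ((Measure.pi fun j : Fin n => μ j.succ).withDensity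
        fun y => ∏ i : Fin n, f i.succ (y i)) := by
      rw [← hIH]; infer_instance
    have hprod : (ν 0).prod (Measure.pi fun j : Fin n => ν j.succ)
        = ((μ 0).prod (Measure.pi fun j : Fin n => μ j.succ)).withDensity
            (fun p => f 0 p.1 * ∏ j : Fin n, f j.succ (p.2 j)) := by
      rw [hν]
      simp only
      rw [hIH]
      exact my_prod_withDensity _ _ _ _ (hf 0) hF'm
    have step : Measure.pi ν = Measure.map e.symm
        (((μ 0).prod (Measure.pi fun j : Fin n => μ j.succ)).withDensity
          (fun p => f 0 p.1 * ∏ j : Fin n, f j.succ (p.2 j))) := by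
      rw [← hprod, ← hrest ν]
      exact hmpν.map_eq.symm
    have hGm : Measurable (fun p : α × (Fin n → α) => f 0 p.1 * ∏ j : Fin n, f j.succ (p.2 j)) :=
      ((hf 0).comp measurable_fst).mul (hF'm.comp measurable_snd)
    rw [step, my_map_withDensity _ e.symm
      (fun p : α × (Fin n → α) => f 0 p.1 * ∏ j : Fin n, f j.succ (p.2 j)) hGm]
    have hbase : (((μ 0).prod (Measure.pi fun j : Fin n => μ j.succ)).map e.symm)
        = Measure.pi μ := by rw [← hrest μ]; exact hmpμ.map_eq
    rw [hbase]
    congr 1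
    ext y
    simp only [Function.comp_apply, MeasurableEquiv.symm_symm, he,
      MeasurableEquiv.piFinSuccAbove_apply]
    rw [Fin.prod_univ_succ]
    simp [Fin.succAbove_zero, Fin.tail]

lemma my_gauss_shift (m c : ℝ) (v : ℝ≥0) (hv : v ≠ 0) :
    gaussianReal (m + c) v = (gaussianReal m v).withDensity
      (fun t => ENNReal.ofReal (Real.exp ((t - m) * c / v - c^2 / (2 * v)))) := by
  have hvpos : (0:ℝ) < v := lt_of_le_of_ne (v.coe_nonneg) (by exact_mod_cast (Ne.symm hv))
  rw [gaussianReal_of_var_ne_zero _ hv, gaussianReal_of_var_ne_zero _ hv,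
    ← withDensity_mul _ (measurable_gaussianPDF _ _)
      (by measurability)]
  congr 1
  ext t
  simp only [Pi.mul_apply, gaussianPDF]
  rw [← ENNReal.ofReal_mul (gaussianPDFReal_nonneg _ _ _)]
  congr 1
  simp only [gaussianPDFReal]
  conv_rhs => rw [mul_assoc, ← Real.exp_add]
  congr 1
  field_simp
  ring

lemma my_gauss_Iic (M s t : ℝ) (hs : 0 < s) :
    gaussianReal M ⟨s^2, sq_nonneg s⟩ (Set.Iic (M + s * t)) = ENNReal.ofReal (stdNormalCDF t) := by
  have h1 : gaussianReal M (⟨s^2, sq_nonneg s⟩ : ℝ≥0)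
      = ((gaussianReal 0 1).map (s * ·)).map (· + M) := by
    rw [gaussianReal_map_const_mul, mul_zero, gaussianReal_map_add_const, zero_add, mul_one]
    rfl
  rw [h1, Measure.map_apply (measurable_add_const M) measurableSet_Iic,
    Measure.map_apply (measurable_const_mul s) ((measurableSet_Iic).preimage (measurable_add_const M))]
  have h2 : ((s * ·) ⁻¹' ((· + M) ⁻¹' Set.Iic (M + s * t))) = Set.Iic t := by
    ext u
    simp only [Set.mem_preimage, Set.mem_Iic]
    constructor
    · intro hu; nlinarith
    · intro hu; nlinarith
  rw [h2, gaussianReal_apply_eq_integral _ one_ne_zero]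
  unfold stdNormalCDF
  congr 1
  refine setIntegral_congr_fun measurableSet_Iic fun u _ => ?_
  simp only [gaussianPDFReal]
  norm_num

/-- Non-adaptive composition of smoothing mechanisms: releasing `k` independent
Gaussian-noised copies of the input `x ∈ ℝ^d` with noise scales `σ i` yields a
mechanism satisfying, for every `ℓ₂` perturbation `e`, the dominance
`P_x E ≥ Φ(a) → P_{x+e} E ≥ Φ(a - ‖e‖₂ * √(∑ i, 1 / σ i ^ 2))`. -/
theorem nonadaptive_composition_dominance (d k : ℕ) (hd : 1 ≤ d) (hk : 1 ≤ k)
    (σ : Fin k → ℝ) (hσ : ∀ i, 0 < σ i)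
    (x e : EuclideanSpace ℝ (Fin d))
    (E : Set (Fin k → EuclideanSpace ℝ (Fin d))) (hE : MeasurableSet E) (a : ℝ)
    (h : (Measure.pi fun i : Fin k =>
            Measure.pi fun j : Fin d => gaussianReal (x j) ⟨σ i ^ 2, sq_nonneg (σ i)⟩)
              ((fun y : Fin k → Fin d → ℝ => fun i => WithLp.toLp 2 (y i)) ⁻¹' E)
          ≥ ENNReal.ofReal (stdNormalCDF a)) :
    (Measure.pi fun i : Fin k =>
        Measure.pi fun j : Fin d =>
          gaussianReal ((x + e) j) ⟨σ i ^ 2, sq_nonneg (σ i)⟩)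
          ((fun y : Fin k → Fin d → ℝ => fun i => WithLp.toLp 2 (y i)) ⁻¹' E)
      ≥ ENNReal.ofReal
          (stdNormalCDF (a - ‖e‖ * Real.sqrt (∑ i, 1 / σ i ^ 2))) := by
  classical
  replace hE : MeasurableSet ((fun y : Fin k → Fin d → ℝ => fun i => WithLp.toLp 2 (y i)) ⁻¹' E) :=
    (by fun_prop : Measurable (fun y : Fin k → Fin d → ℝ => fun i => WithLp.toLp 2 (y i))) hE
  generalize ((fun y : Fin k → Fin d → ℝ => fun i => WithLp.toLp 2 (y i)) ⁻¹' E) = E at h hE ⊢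
  by_cases he : e = 0
  · subst he
    simpa using h
  -- setup
  set V : Fin k → ℝ≥0 := fun i => ⟨σ i ^ 2, sq_nonneg (σ i)⟩ with hV
  have hVne : ∀ i, V i ≠ 0 := fun i => by
    intro hz; have h3 := congrArg NNReal.toReal hz; change σ i ^ 2 = 0 at h3
    exact pow_ne_zero 2 (hσ i).ne' h3
  set c : Fin k → ℝ := fun i => 1 / σ i ^ 2 with hc
  have hcpos : ∀ i, 0 < c i := fun i => by
    rw [hc]; exact one_div_pos.2 (pow_pos (hσ i) 2)
  set w : ℝ := ∑ j, (e j) ^ 2 with hw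
  set T : ℝ := ∑ i, c i with hT
  have hTpos : 0 < T := Finset.sum_pos (fun i _ => hcpos i) (by
    simpa using Finset.univ_nonempty_iff.2 (Fin.pos_iff_nonempty.mp hk))
  have hepos : 0 < ‖e‖ := norm_pos_iff.2 he
  have hnormsq : ‖e‖ ^ 2 = w := by
    rw [EuclideanSpace.norm_eq, Real.sq_sqrt (by positivity), hw]
    simp [Real.norm_eq_abs, sq_abs]
  have hwpos : 0 < w := by rw [← hnormsq]; positivity
  set r : ℝ := ‖e‖ * Real.sqrt T with hr
  have hrpos : 0 < r := by rw [hr]; positivity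
  have hr2 : r ^ 2 = w * T := by
    rw [hr, mul_pow, Real.sq_sqrt hTpos.le, hnormsq]
  -- probability instances
  have hP1 : ∀ (z : EuclideanSpace ℝ (Fin d)) (i : Fin k),
      IsProbabilityMeasure
        ((Measure.pi fun j : Fin d => gaussianReal (z j) (V i)) :
          Measure (Fin d → ℝ)) :=
    fun z i => Measure.pi.instIsProbabilityMeasure _
  set μ : Measure (Fin k → Fin d → ℝ) :=
    Measure.pi fun i => Measure.pi fun j => gaussianReal (x j) (V i) with hμ
  set ν : Measure (Fin k → Fin d → ℝ) :=
    Measure.pi fun i => Measure.pi fun j => gaussianReal ((x + e) j) (V i) with hν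
  have hPμ : IsProbabilityMeasure μ := by
    refine ⟨?_⟩
    rw [hμ, Measure.pi_univ]
    exact Finset.prod_eq_one fun i _ => (hP1 x i).measure_univ
  have hPν : IsProbabilityMeasure ν := by
    refine ⟨?_⟩
    rw [hν, Measure.pi_univ]
    exact Finset.prod_eq_one fun i _ => (hP1 (x + e) i).measure_univ
  have hxe : ∀ j, (x + e) j = x j + e j := fun j => rfl
  -- measurability helpers
  have hev : ∀ j : Fin d, Measurable fun u : Fin d → ℝ => u j :=
    fun j => measurable_pi_apply j
  have hsum : Measurable fun u : Fin d → ℝ => ∑ j, e j * u j :=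
    Finset.measurable_sum _ (fun j _ => (hev j).const_mul (e j))
  -- the linear statistic
  set g : (Fin k → Fin d → ℝ) → ℝ :=
    fun y => ∑ i, c i * (∑ j, e j * y i j) with hg
  have hgi : ∀ i : Fin k,
      Measurable fun y : Fin k → Fin d → ℝ => c i * ∑ j, e j * y i j :=
    fun i => (hsum.comp (measurable_pi_apply i)).const_mul (c i)
  have hgm : Measurable g := by
    rw [hg]; exact Finset.measurable_sum _ (fun i _ => hgi i)
  set En : Fin d → ℝ≥0 := fun j => ⟨e j ^ 2, sq_nonneg (e j)⟩ with hEn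
  set Cn : Fin k → ℝ≥0 := fun i => ⟨c i ^ 2, sq_nonneg (c i)⟩ with hCn
  -- law of the block statistic
  have hblock : ∀ (z : EuclideanSpace ℝ (Fin d)) (i : Fin k),
      (Measure.pi fun j : Fin d => gaussianReal (z j) (V i)).map
          (fun u : Fin d → ℝ => c i * ∑ j, e j * u j)
        = gaussianReal (c i * ∑ j, e j * z j)
            (Cn i *
              ∑ j : Fin d, En j * V i) := by
    intro z i
    have hinner : (Measure.pi fun j : Fin d => gaussianReal (z j) (V i)).map
        (fun u : Fin d → ℝ => ∑ j, e j * u j)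
        = gaussianReal (∑ j, e j * z j)
            (∑ j : Fin d, En j * V i) :=
      my_pi_map_sum (α := ℝ) d (fun j => gaussianReal (z j) (V i))
        (fun j => by infer_instance) (fun j t => e j * t)
        (fun j => measurable_const_mul _) (fun j => e j * z j)
        (fun j => En j * V i)
        (fun j => by rw [hEn]; exact gaussianReal_map_const_mul (e j))
    have hcmp : (Measure.pi fun j : Fin d => gaussianReal (z j) (V i)).map
        (fun u : Fin d → ℝ => c i * ∑ j, e j * u j)
        = ((Measure.pi fun j : Fin d => gaussianReal (z j) (V i)).map
            (fun u : Fin d → ℝ => ∑ j, e j * u j)).map (fun t => c i * t) :=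
      (Measure.map_map (measurable_const_mul (c i)) hsum).symm
    rw [hcmp, hinner, gaussianReal_map_const_mul, hCn]
    rfl
  -- laws of g under μ and ν
  set M₀ : ℝ := ∑ i, c i * ∑ j, e j * x j with hM₀
  set Vtot : ℝ≥0 := ∑ i : Fin k, Cn i *
    ∑ j : Fin d, En j * V i with hVtot
  have hVtotr : Vtot = ⟨r ^ 2, sq_nonneg r⟩ := by
    apply NNReal.coe_injective
    rw [hVtot]
    push_cast
    simp only [hCn, hEn, hV, NNReal.coe_mk, my_coe_subtype_mk, NNReal.toReal]
    rw [hr2, hw, hT]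
    rw [Finset.mul_sum]
    refine Finset.sum_congr rfl fun i _ => ?_
    rw [← Finset.sum_mul]
    have hσi : σ i ≠ 0 := (hσ i).ne'
    simp only [hc]
    field_simp
  have hlawμ : μ.map g = gaussianReal M₀ Vtot := by
    rw [hμ, hg, hM₀, hVtot]
    exact my_pi_map_sum (α := Fin d → ℝ) k _
      (fun i => hP1 x i)
      (fun i u => c i * ∑ j, e j * u j)
      (fun i => (hsum.const_mul (c i)))
      (fun i => c i * ∑ j, e j * x j) _ (fun i => hblock x i)
  have hM₁ : (∑ i, c i * ∑ j, e j * (x j + e j)) = M₀ + r ^ 2 := by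
    have hinner2 : (∑ j, e j * (x j + e j)) = (∑ j, e j * x j) + ∑ j, (e j) ^ 2 := by
      rw [← Finset.sum_add_distrib]
      exact Finset.sum_congr rfl fun j _ => by ring
    rw [hM₀, hr2, hw, hT, Finset.mul_sum, ← Finset.sum_add_distrib]
    refine Finset.sum_congr rfl fun i _ => ?_
    rw [hinner2]
    ring
  have hlawν : ν.map g = gaussianReal (M₀ + r ^ 2) Vtot := by
    have h1 : ν.map g = gaussianReal (∑ i, c i * ∑ j, e j * (x + e) j) Vtot := by
      rw [hν, hg, hVtot]
      exact my_pi_map_sum (α := Fin d → ℝ) k _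
        (fun i => hP1 (x + e) i)
        (fun i u => c i * ∑ j, e j * u j)
        (fun i => (hsum.const_mul (c i)))
        (fun i => c i * ∑ j, e j * (x + e) j) _ (fun i => hblock (x + e) i)
    simp only [hxe] at h1
    rw [h1, ← hM₁]
  -- densities
  set ρ : (Fin k → Fin d → ℝ) → ℝ≥0∞ :=
    fun y => ∏ i, ∏ j, ENNReal.ofReal
      (Real.exp ((y i j - x j) * e j / (V i) - (e j)^2 / (2 * V i))) with hρ
  have hρijm : ∀ (i : Fin k) (j : Fin d), Measurable fun t : ℝ =>
      ENNReal.ofReal (Real.exp ((t - x j) * e j / (V i) - (e j)^2 / (2 * V i))) := by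
    intro i j
    exact ((((measurable_id.sub_const (x j)).mul_const (e j)).div_const _).sub_const
      _).exp.ennreal_ofReal
  have hinnerdens : ∀ i : Fin k,
      (Measure.pi fun j : Fin d => gaussianReal ((x + e) j) (V i) :
        Measure (Fin d → ℝ))
      = ((Measure.pi fun j : Fin d => gaussianReal (x j) (V i)) :
          Measure (Fin d → ℝ)).withDensity
          (fun u => ∏ j, ENNReal.ofReal
            (Real.exp ((u j - x j) * e j / (V i) - (e j)^2 / (2 * V i)))) := by
    intro i
    have hshift : ∀ j : Fin d, gaussianReal ((x + e) j) (V i)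
        = (gaussianReal (x j) (V i)).withDensity
            (fun t => ENNReal.ofReal
              (Real.exp ((t - x j) * e j / (V i) - (e j)^2 / (2 * V i)))) :=
      fun j => my_gauss_shift (x j) (e j) (V i) (hVne i)
    calc (Measure.pi fun j : Fin d => gaussianReal ((x + e) j) (V i) :
        Measure (Fin d → ℝ))
        = Measure.pi fun j : Fin d => (gaussianReal (x j) (V i)).withDensity
            (fun t => ENNReal.ofReal
              (Real.exp ((t - x j) * e j / (V i) - (e j)^2 / (2 * V i)))) := by
          congr 1; exact funext hshift
      _ = _ := by
          refine my_pi_withDensity d _ (fun j => by infer_instance) _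
            (fun j => hρijm i j) (fun j => ?_)
          rw [← hshift j]; infer_instance
  have hdens : ν = μ.withDensity ρ := by
    rw [hν, hμ, hρ]
    calc (Measure.pi fun i => Measure.pi fun j => gaussianReal ((x + e) j) (V i))
        = Measure.pi fun i =>
            ((Measure.pi fun j : Fin d => gaussianReal (x j) (V i)) :
              Measure (Fin d → ℝ)).withDensity
            (fun u => ∏ j, ENNReal.ofReal
              (Real.exp ((u j - x j) * e j / (V i) - (e j)^2 / (2 * V i)))) := by
          congr 1; exact funext hinnerdens
      _ = _ := by
          refine my_pi_withDensity k _ (fun i => hP1 x i) _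
            (fun i => Finset.measurable_prod _ fun j _ => (hρijm i j).comp (hev j))
            (fun i => ?_)
          rw [← hinnerdens i]; exact hP1 (x + e) i
  -- pointwise density formula
  have hcoeV : ∀ i, ((V i : ℝ≥0) : ℝ) = σ i ^ 2 := fun i => rfl
  have hprodexp : ∀ (n : ℕ) (b : Fin n → ℝ),
      (∏ jj, ENNReal.ofReal (Real.exp (b jj))) = ENNReal.ofReal (Real.exp (∑ jj, b jj)) := by
    intro n b
    rw [Real.exp_sum, ENNReal.ofReal_prod_of_nonneg fun i _ => (Real.exp_pos _).le]
  have hsumexp : ∀ y : Fin k → Fin d → ℝ,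
      (∑ i, ∑ j, ((y i j - x j) * e j / (σ i ^ 2) - (e j) ^ 2 / (2 * σ i ^ 2)))
        = g y - M₀ - r ^ 2 / 2 := by
    intro y
    rw [hg]
    simp only
    rw [hM₀, hr2, hw, hT, Finset.mul_sum, Finset.sum_div, ← Finset.sum_sub_distrib,
      ← Finset.sum_sub_distrib]
    refine Finset.sum_congr rfl fun i _ => ?_
    have h4 : (∑ j, e j ^ 2) * c i / 2 = ∑ j, e j ^ 2 * c i / 2 := by
      rw [Finset.sum_mul, Finset.sum_div]
    rw [h4, Finset.mul_sum, Finset.mul_sum, ← Finset.sum_sub_distrib,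
      ← Finset.sum_sub_distrib]
    refine Finset.sum_congr rfl fun j _ => ?_
    have hσi : σ i ≠ 0 := (hσ i).ne'
    simp only [hc]
    field_simp
  have hexpo : ∀ y : Fin k → Fin d → ℝ,
      ρ y = ENNReal.ofReal (Real.exp (g y - M₀ - r ^ 2 / 2)) := by
    intro y
    rw [hρ]
    simp only [hcoeV]
    calc (∏ i, ∏ j, ENNReal.ofReal
          (Real.exp ((y i j - x j) * e j / (σ i ^ 2) - (e j) ^ 2 / (2 * σ i ^ 2))))
        = ∏ i, ENNReal.ofReal (Real.exp
            (∑ j, ((y i j - x j) * e j / (σ i ^ 2) - (e j) ^ 2 / (2 * σ i ^ 2)))) :=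
          Finset.prod_congr rfl fun i _ => hprodexp d _
      _ = ENNReal.ofReal (Real.exp
            (∑ i, ∑ j, ((y i j - x j) * e j / (σ i ^ 2) - (e j) ^ 2 / (2 * σ i ^ 2)))) :=
          hprodexp k _
      _ = _ := by rw [hsumexp y]
  -- the half-space event
  set A : Set (Fin k → Fin d → ℝ) := g ⁻¹' (Set.Iic (M₀ + r * a)) with hA
  have hAm : MeasurableSet A := hgm measurableSet_Iic
  have hμA : μ A = ENNReal.ofReal (stdNormalCDF a) := by
    rw [hA, ← Measure.map_apply hgm measurableSet_Iic, hlawμ, hVtotr]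
    exact my_gauss_Iic M₀ r a hrpos
  have hνA : ν A = ENNReal.ofReal (stdNormalCDF (a - r)) := by
    rw [hA, ← Measure.map_apply hgm measurableSet_Iic, hlawν, hVtotr,
      show M₀ + r * a = (M₀ + r ^ 2) + r * (a - r) by ring]
    exact my_gauss_Iic _ r _ hrpos
  -- comparison of events
  have hμAE : μ A ≤ μ E := by rw [hμA]; exact h
  have h3 : μ (A \ E) ≤ μ (E \ A) := by
    have h4 : μ (E ∩ A) + μ (A \ E) = μ A := by
      rw [Set.inter_comm]; exact measure_inter_add_diff A hE
    have h5 : μ (E ∩ A) + μ (E \ A) = μ E := measure_inter_add_diff E hAm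
    have h6 : μ (E ∩ A) + μ (A \ E) ≤ μ (E ∩ A) + μ (E \ A) := by
      rw [h4, h5]; exact hμAE
    exact (ENNReal.add_le_add_iff_left (measure_ne_top μ _)).mp h6
  set L : ℝ≥0∞ := ENNReal.ofReal (Real.exp (r * a - r ^ 2 / 2)) with hL
  have hbound1 : ν (A \ E) ≤ L * μ (A \ E) := by
    rw [hdens, withDensity_apply _ (hAm.diff hE)]
    calc ∫⁻ y in A \ E, ρ y ∂μ ≤ ∫⁻ _ in A \ E, L ∂μ := by
          refine setLIntegral_mono' (hAm.diff hE) fun y hy => ?_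
          rw [hexpo y, hL]
          refine ENNReal.ofReal_le_ofReal (Real.exp_le_exp.2 ?_)
          have hyA : g y ≤ M₀ + r * a := hy.1
          linarith
      _ = L * μ (A \ E) := setLIntegral_const _ _
  have hbound2 : L * μ (E \ A) ≤ ν (E \ A) := by
    rw [hdens, withDensity_apply _ (hE.diff hAm)]
    calc L * μ (E \ A) = ∫⁻ _ in E \ A, L ∂μ := (setLIntegral_const _ _).symm
      _ ≤ ∫⁻ y in E \ A, ρ y ∂μ := by
          refine setLIntegral_mono' (hE.diff hAm) fun y hy => ?_
          rw [hexpo y, hL]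
          refine ENNReal.ofReal_le_ofReal (Real.exp_le_exp.2 ?_)
          have hyA : M₀ + r * a ≤ g y := by
            have : ¬ g y ≤ M₀ + r * a := by simpa [hA] using hy.2
            exact le_of_not_ge this
          linarith
  -- conclude
  rw [ge_iff_le]
  show ENNReal.ofReal (stdNormalCDF (a - r)) ≤ ν E
  rw [← hνA]
  calc ν A = ν (A ∩ E) + ν (A \ E) := (measure_inter_add_diff A hE).symm
    _ ≤ ν (A ∩ E) + L * μ (A \ E) := add_le_add le_rfl hbound1
    _ ≤ ν (A ∩ E) + L * μ (E \ A) := add_le_add le_rfl (mul_le_mul_right h3 L)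
    _ ≤ ν (A ∩ E) + ν (E \ A) := add_le_add le_rfl hbound2
    _ = ν (E ∩ A) + ν (E \ A) := by rw [Set.inter_comm]
    _ = ν E := measure_inter_add_diff E hAm

end ARSAux
end

section
/- (Robustness certificate from GDP dominance; Theorem 1, abstract form.) Let Y be a finite nonempty set, σ > 0, and let K assign to each x ∈ ℝ^d a probability measure K(x) on Y. Let Φ(t) denote the standard normal CDF, Φ(t) = (2π)^{−1/2}·∫_{−∞}^t e^{−u²/2} du. Assume the dominance property: for all u, v ∈ ℝ^d, every E ⊆ Y, and every a ∈ ℝ, if K(u)(E) ≥ Φ(a) then K(v)(E) ≥ Φ(a − ‖u − v‖₂/σ). Fix x ∈ ℝ^d, a label y₊ ∈ Y, and reals a ≥ b such that K(x)({y₊}) ≥ Φ(a) and K(x)({y}) ≤ Φ(b) for every y ≠ y₊. Then for every e ∈ ℝ^d with ‖e‖₂ < (σ/2)·(a − b) and every y ≠ y₊, we have K(x+e)({y₊}) > K(x+e)({y}). -/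
open MeasureTheory

lemma stdGauss_integrable :
    Integrable (fun u : ℝ => (Real.sqrt (2 * Real.pi))⁻¹ * Real.exp (-u ^ 2 / 2)) := by
  have h : Integrable (fun u : ℝ => Real.exp (-(1/2 : ℝ) * u ^ 2)) :=
    integrable_exp_neg_mul_sq (by norm_num)
  have := h.const_mul (Real.sqrt (2 * Real.pi))⁻¹
  convert this using 2 with u
  ring_nf

lemma stdGauss_pos (u : ℝ) : 0 < (Real.sqrt (2 * Real.pi))⁻¹ * Real.exp (-u ^ 2 / 2) := by
  apply mul_pos (inv_pos.mpr (Real.sqrt_pos.mpr (by positivity))) (Real.exp_pos _)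

lemma stdNormalCDF_nonneg (t : ℝ) : 0 ≤ stdNormalCDF t :=
  setIntegral_nonneg measurableSet_Iic (fun u _ => (stdGauss_pos u).le)

lemma stdNormalCDF_strictMono : StrictMono stdNormalCDF := by
  intro t₁ t₂ h
  have hunion : Set.Iic t₂ = Set.Iic t₁ ∪ Set.Ioc t₁ t₂ := (Set.Iic_union_Ioc_eq_Iic h.le).symm
  have hdisj : Disjoint (Set.Iic t₁) (Set.Ioc t₁ t₂) := by
    simp [Set.disjoint_left]
    intro x hx; exact fun h' => absurd hx (not_le.mpr h')
  unfold stdNormalCDF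
  rw [hunion, setIntegral_union hdisj measurableSet_Ioc
    stdGauss_integrable.integrableOn stdGauss_integrable.integrableOn]
  have hpos : 0 < ∫ u in Set.Ioc t₁ t₂, (Real.sqrt (2 * Real.pi))⁻¹ * Real.exp (-u ^ 2 / 2) := by
    rw [setIntegral_pos_iff_support_of_nonneg_ae]
    · have : Function.support (fun u : ℝ => (Real.sqrt (2 * Real.pi))⁻¹ * Real.exp (-u ^ 2 / 2))
          = Set.univ := by
        ext u
        simp only [Function.mem_support, Set.mem_univ, iff_true]
        exact (stdGauss_pos u).ne'
      rw [this, Set.univ_inter]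
      simpa [Real.volume_Ioc] using sub_pos.mpr h
    · exact Filter.Eventually.of_forall (fun u => (stdGauss_pos u).le)
    · exact stdGauss_integrable.integrableOn
  linarith

/-- Robustness certificate from GDP dominance (Theorem 1, abstract form): if the
mechanism `K` satisfies the Gaussian dominance property with scale `σ`, and at input
`x` the top class `yPlus` has probability at least `Φ(a)` while every other class has
probability at most `Φ(b)` with `a ≥ b`, then for every perturbation `e` with
`‖e‖₂ < (σ/2) * (a - b)` the class `yPlus` still has the strictly largest probability. -/
theorem robustness_certificate_from_dominance
    {d : ℕ} {Y : Type*} [Fintype Y] [Nonempty Y] [MeasurableSpace Y]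
    (σ : ℝ) (hσ : 0 < σ)
    (K : EuclideanSpace ℝ (Fin d) → Measure Y)
    (hK : ∀ x, IsProbabilityMeasure (K x))
    (hdom : ∀ u v : EuclideanSpace ℝ (Fin d), ∀ E : Set Y, ∀ a : ℝ,
        K u E ≥ ENNReal.ofReal (stdNormalCDF a) →
        K v E ≥ ENNReal.ofReal (stdNormalCDF (a - ‖u - v‖ / σ)))
    (x : EuclideanSpace ℝ (Fin d)) (yPlus : Y) (a b : ℝ) (hab : a ≥ b)
    (htop : K x {yPlus} ≥ ENNReal.ofReal (stdNormalCDF a))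
    (hother : ∀ y : Y, y ≠ yPlus → K x {y} ≤ ENNReal.ofReal (stdNormalCDF b)) :
    ∀ e : EuclideanSpace ℝ (Fin d), ‖e‖ < (σ / 2) * (a - b) →
      ∀ y : Y, y ≠ yPlus → K (x + e) {yPlus} > K (x + e) {y} := by
  intro e he y hy
  set c : ℝ := (a + b) / 2 with hc
  have hne : ‖e‖ / σ < (a - b) / 2 := by
    rw [div_lt_iff₀ hσ]; nlinarith
  have h1 : b < c - ‖e‖ / σ := by simp only [hc]; linarith
  have h2 : c < a - ‖e‖ / σ := by simp only [hc]; linarith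
  -- lower bound for yPlus at x + e
  have hlow := hdom x (x + e) {yPlus} a htop
  have hx1 : ‖x - (x + e)‖ = ‖e‖ := by
    rw [sub_add_eq_sub_sub, sub_self, zero_sub, norm_neg]
  rw [hx1] at hlow
  -- upper bound for y at x + e
  have hup : K (x + e) {y} < ENNReal.ofReal (stdNormalCDF c) := by
    by_contra hcon
    push_neg at hcon
    have hd := hdom (x + e) x {y} c hcon
    have hx2 : ‖x + e - x‖ = ‖e‖ := by rw [add_sub_cancel_left]
    rw [hx2] at hd
    have hlt : ENNReal.ofReal (stdNormalCDF b) < ENNReal.ofReal (stdNormalCDF (c - ‖e‖ / σ)) :=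
      (ENNReal.ofReal_lt_ofReal_iff_of_nonneg (stdNormalCDF_nonneg b)).mpr
        (stdNormalCDF_strictMono h1)
    exact absurd (le_trans hd.le (hother y hy)) (not_le.mpr hlt)
  calc K (x + e) {y} < ENNReal.ofReal (stdNormalCDF c) := hup
    _ ≤ ENNReal.ofReal (stdNormalCDF (a - ‖e‖ / σ)) :=
        ENNReal.ofReal_le_ofReal (stdNormalCDF_strictMono h2).le
    _ ≤ K (x + e) {yPlus} := hlow
end
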